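/- arXiv:2411.06043 — 3 statements merged into one kernel-verified Lean document; each statement's English description precedes it below -/
import Mathlib

section
/- Anti-cupping lemma: let α, β, f be total functions and let A ⊆ ℕ be (α ⊕ β ⊕ f)-immune (A has no infinite subset that is c.e. relative to α ⊕ β ⊕ f). Then for any partial function g whose domain is α-c.e., if g ≤subT (f↾A) ⊕ β then g ≤subT β. -/
open Classical

noncomputable section

/-- `as` is a valid answer history for the sequential oracle computation of `Φ`
with oracle `g` on input `n`: at each round `k`, the machine outputs a query
`(false, q)` with `q` in the domain of `g`, answered by `g q = as[k]`. -/
def ValidHist (Φ : List ℕ →. Bool × ℕ) (g : ℕ →. ℕ) (n : ℕ) (as : List ℕ) : Prop :=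
  ∀ (k : ℕ) (hk : k < as.length), ∃ q : ℕ,
    (false, q) ∈ Φ (n :: as.take k) ∧ (as[k]'hk) ∈ g q

/-- The sequential oracle computation `Φ[g](n)` halts with output `m`. -/
def HaltsTo (Φ : List ℕ →. Bool × ℕ) (g : ℕ →. ℕ) (n m : ℕ) : Prop :=
  ∃ as : List ℕ, ValidHist Φ g n as ∧ (true, m) ∈ Φ (n :: as)

/-- subTuring reducibility: `f ⊆ Φ[g]` for some partial computable `Φ`. -/
def SubTuringLE (f g : ℕ →. ℕ) : Prop :=
  ∃ Φ : List ℕ →. Bool × ℕ, Partrec Φ ∧ ∀ n m, m ∈ f n → HaltsTo Φ g n m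

/-- subTuring equivalence. -/
def SubTuringEquiv (f g : ℕ →. ℕ) : Prop := SubTuringLE f g ∧ SubTuringLE g f

/-- The join `f ⊕ g`: `(f ⊕ g)(2n) = f(n)`, `(f ⊕ g)(2n+1) = g(n)`. -/
def PJoin (f g : ℕ →. ℕ) : ℕ →. ℕ := fun n =>
  if n % 2 = 0 then f (n / 2) else g (n / 2)

/-- Restriction of a partial function to a set: `f↾A`. -/
def restrictTo (f : ℕ →. ℕ) (A : Set ℕ) : ℕ →. ℕ := fun n =>
  if n ∈ A then f n else Part.none

/-- The join of two total functions. -/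
def totalJoin (X Y : ℕ → ℕ) : ℕ → ℕ := fun n =>
  if n % 2 = 0 then X (n / 2) else Y (n / 2)

/-- `S` is computably enumerable relative to the total oracle `X`. -/
def REIn (X : ℕ → ℕ) (S : Set ℕ) : Prop :=
  ∃ Φ : List ℕ →. Bool × ℕ, Partrec Φ ∧
    ∀ n, n ∈ S ↔ ∃ m, HaltsTo Φ (X : ℕ →. ℕ) n m

/-- `A` is `X`-immune: `A` has no infinite `X`-c.e. subset. -/
def ImmuneIn (X : ℕ → ℕ) (A : Set ℕ) : Prop :=
  ∀ S : Set ℕ, REIn X S → S ⊆ A → S.Finite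

namespace AntiCup

/-- Extend a valid history by one answered query. -/
theorem validHist_snoc {Φ : List ℕ →. Bool × ℕ} {h : ℕ →. ℕ} {n : ℕ} {as : List ℕ} {q v : ℕ}
    (H : ValidHist Φ h n as) (hq : (false, q) ∈ Φ (n :: as)) (hv : v ∈ h q) :
    ValidHist Φ h n (as ++ [v]) := by
  intro k hk
  rcases lt_or_eq_of_le (Nat.lt_succ_iff.mp (by simpa using hk)) with hlt | heq
  · obtain ⟨q', hq', hv'⟩ := H k hlt
    refine ⟨q', ?_, ?_⟩
    · rwa [List.take_append_of_le_length (le_of_lt hlt)]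
    · simpa [List.getElem_append_left hlt] using hv'
  · subst heq
    refine ⟨q, ?_, ?_⟩
    · rwa [List.take_append_of_le_length le_rfl, List.take_length]
    · simpa using hv

/-- Monotonicity in the oracle. -/
theorem validHist_mono {Φ : List ℕ →. Bool × ℕ} {h h' : ℕ →. ℕ} {n : ℕ} {as : List ℕ}
    (hsub : ∀ q v, v ∈ h q → v ∈ h' q) (H : ValidHist Φ h n as) : ValidHist Φ h' n as := by
  intro k hk
  obtain ⟨q, hq, hv⟩ := H k hk
  exact ⟨q, hq, hsub _ _ hv⟩

/-- Valid histories are uniquely determined: any two agree on their common prefix. -/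
theorem validHist_take_eq {Φ : List ℕ →. Bool × ℕ} {h : ℕ →. ℕ} {n : ℕ} {as as' : List ℕ}
    (H : ValidHist Φ h n as) (H' : ValidHist Φ h n as') :
    ∀ k, k ≤ as.length → k ≤ as'.length → as.take k = as'.take k := by
  intro k
  induction k with
  | zero => simp
  | succ k ih =>
    intro hk hk'
    have hkk : k < as.length := Nat.lt_of_succ_le hk
    have hkk' : k < as'.length := Nat.lt_of_succ_le hk'
    have heq : as.take k = as'.take k := ih (le_of_lt hkk) (le_of_lt hkk')
    obtain ⟨q, hq, hv⟩ := H k hkk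
    obtain ⟨q', hq', hv'⟩ := H' k hkk'
    rw [heq] at hq
    have hqq : q = q' := by
      have := Part.mem_unique hq hq'
      exact (Prod.mk.injEq _ _ _ _).mp this |>.2
    subst hqq
    have hvv : as[k]'hkk = as'[k]'hkk' := Part.mem_unique hv hv'
    rw [List.take_succ, List.take_succ, heq, List.getElem?_eq_getElem hkk,
      List.getElem?_eq_getElem hkk', hvv]

/-- A valid history cannot properly extend a halting history. -/
theorem validHist_le_halting {Φ : List ℕ →. Bool × ℕ} {h : ℕ →. ℕ} {n m : ℕ} {as as0 : List ℕ}
    (H : ValidHist Φ h n as) (H0 : ValidHist Φ h n as0) (hm : (true, m) ∈ Φ (n :: as0)) :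
    as.length ≤ as0.length ∧ as = as0.take as.length := by
  have hle : as.length ≤ as0.length := by
    by_contra hlt
    push_neg at hlt
    obtain ⟨q, hq, _⟩ := H as0.length hlt
    rw [validHist_take_eq H H0 as0.length (le_of_lt hlt) le_rfl, List.take_length] at hq
    exact absurd (Part.mem_unique hm hq) (by simp)
  exact ⟨hle, by
    have := validHist_take_eq H H0 as.length le_rfl hle
    rwa [List.take_length] at this⟩

/-- Halting outputs are unique. -/
theorem haltsTo_unique {Φ : List ℕ →. Bool × ℕ} {h : ℕ →. ℕ} {n m m' : ℕ}
    (H : HaltsTo Φ h n m) (H' : HaltsTo Φ h n m') : m = m' := by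
  obtain ⟨as, Hv, hm⟩ := H
  obtain ⟨as', Hv', hm'⟩ := H'
  rcases le_total as.length as'.length with hle | hle
  · obtain ⟨hle2, heq⟩ := validHist_le_halting Hv' Hv hm
    have : as'.length = as.length := le_antisymm hle2 hle
    rw [this, List.take_length] at heq
    subst heq
    exact ((Prod.mk.injEq _ _ _ _).mp (Part.mem_unique hm hm')).2
  · obtain ⟨hle2, heq⟩ := validHist_le_halting Hv Hv' hm'
    have : as.length = as'.length := le_antisymm hle2 hle
    rw [this, List.take_length] at heq
    subst heq
    exact ((Prod.mk.injEq _ _ _ _).mp (Part.mem_unique hm hm')).2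

end AntiCup
namespace AntiCup

open Nat.Partrec (Code)
open Nat.Partrec.Code

/-- The `ℕ →. ℕ` version of a machine. -/
def liftP (Φ : List ℕ →. Bool × ℕ) : ℕ →. ℕ := fun n =>
  Part.bind (Encodable.decode (α := List ℕ) n) fun l => (Φ l).map Encodable.encode

theorem liftP_partrec {Φ : List ℕ →. Bool × ℕ} (hΦ : Partrec Φ) : Nat.Partrec (liftP Φ) := hΦ

/-- One bounded-evaluation step of the machine with code `c`. -/
def qstep (c : Code) (s : ℕ) (L : List ℕ) : Option (Bool × ℕ) :=
  (evaln s c (Encodable.encode L)).bind fun r => Encodable.decode (α := Bool × ℕ) r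

theorem qstep_sound {Φ : List ℕ →. Bool × ℕ} {c : Code} (hc : eval c = liftP Φ)
    {s : ℕ} {L : List ℕ} {x : Bool × ℕ} (h : qstep c s L = some x) : x ∈ Φ L := by
  unfold qstep at h
  rcases Option.bind_eq_some_iff.mp h with ⟨r, hr, hdec⟩
  have hev : r ∈ eval c (Encodable.encode L) := evaln_sound hr
  rw [hc] at hev
  simp only [liftP, Encodable.encodek, Part.coe_some, Part.bind_some, Part.mem_map_iff] at hev
  obtain ⟨y, hy, hye⟩ := hev
  subst hye
  rw [Encodable.encodek] at hdec
  cases hdec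
  exact hy

theorem qstep_complete {Φ : List ℕ →. Bool × ℕ} {c : Code} (hc : eval c = liftP Φ)
    {L : List ℕ} {x : Bool × ℕ} (h : x ∈ Φ L) :
    ∃ s, ∀ s', s ≤ s' → qstep c s' L = some x := by
  have hev : Encodable.encode x ∈ eval c (Encodable.encode L) := by
    rw [hc]
    simp only [liftP, Encodable.encodek, Part.coe_some, Part.bind_some, Part.mem_map_iff]
    exact ⟨x, h, rfl⟩
  obtain ⟨k, hk⟩ := evaln_complete.mp hev
  refine ⟨k, fun s' hs' => ?_⟩
  unfold qstep
  have hm : Encodable.encode x ∈ evaln s' c (Encodable.encode L) := evaln_mono hs' hk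
  have : evaln s' c (Encodable.encode L) = some (Encodable.encode x) := hm
  rw [this, Option.bind_some, Encodable.encodek]

end AntiCup
namespace AntiCup

/-- A machine that reads the oracle at positions `0, 1, 2, …` and halts as soon as the
total test `chk` succeeds on the data read so far. -/
def simpleMachine (chk : ℕ → List ℕ → Option ℕ) : List ℕ →. Bool × ℕ := fun l =>
  Part.some (match chk l.headI l.tail with
    | some m => (true, m)
    | none => (false, l.tail.length))

theorem simpleMachine_partrec {chk : ℕ → List ℕ → Option ℕ} (h : Computable₂ chk) :
    Partrec (simpleMachine chk) := by
  have hF : Computable fun l : List ℕ =>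
      (match chk l.headI l.tail with
        | some m => (true, m)
        | none => (false, l.tail.length) : Bool × ℕ) := by
    have h1 : Computable fun l : List ℕ => chk l.headI l.tail :=
      h.comp Primrec.list_headI.to_comp Primrec.list_tail.to_comp
    exact Computable.option_casesOn h1
      ((Computable.const false).pair (Primrec.list_length.to_comp.comp
        Primrec.list_tail.to_comp))
      ((Computable.const true).pair Computable.snd).to₂ |>.of_eq
      (fun l => by cases chk l.headI l.tail <;> rfl)
  exact hF.partrec.of_eq fun l => rfl

theorem simpleMachine_apply (chk : ℕ → List ℕ → Option ℕ) (n : ℕ) (as : List ℕ) :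
    simpleMachine chk (n :: as) = Part.some (match chk n as with
      | some m => (true, m)
      | none => (false, as.length)) := rfl

theorem simpleMachine_sound {chk : ℕ → List ℕ → Option ℕ} {X : ℕ → ℕ} {n m : ℕ}
    (H : HaltsTo (simpleMachine chk) (X : ℕ →. ℕ) n m) :
    ∃ L, chk n (List.map X (List.range L)) = some m ∧
      ∀ j, j < L → chk n (List.map X (List.range j)) = none := by
  obtain ⟨as, Hv, hm⟩ := H
  have chknone : ∀ k (hk : k < as.length), chk n (as.take k) = none := by
    intro k hk
    obtain ⟨q, hq, _⟩ := Hv k hk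
    rw [simpleMachine_apply, Part.mem_some_iff] at hq
    rcases h : chk n (as.take k) with _ | m'
    · rfl
    · rw [h] at hq; exact absurd hq (by simp)
  have hpre : ∀ k, k ≤ as.length → as.take k = List.map X (List.range k) := by
    intro k
    induction k with
    | zero => simp
    | succ k ih =>
      intro hk
      have hkk : k < as.length := Nat.lt_of_succ_le hk
      obtain ⟨q, hq, hv⟩ := Hv k hkk
      rw [simpleMachine_apply, Part.mem_some_iff, chknone k hkk] at hq
      have hq' : q = k := by
        have h2 : (false, q) = ((false, (as.take k).length) : Bool × ℕ) := hq
        have h3 := congrArg Prod.snd h2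
        simp only [List.length_take] at h3
        omega
      rw [hq'] at hv
      have hval : as[k]'hkk = X k := by simpa using hv
      rw [List.take_succ, List.getElem?_eq_getElem hkk, ih (le_of_lt hkk), hval,
        List.range_succ, List.map_append]
      rfl
  have hfull : as = List.map X (List.range as.length) := by
    have := hpre as.length le_rfl; rwa [List.take_length] at this
  refine ⟨as.length, ?_, fun j hj => ?_⟩
  · rw [simpleMachine_apply, Part.mem_some_iff] at hm
    rcases h : chk n as with _ | m'
    · rw [h] at hm; exact absurd hm (by simp)
    · rw [h] at hm
      have : m = m' := ((Prod.mk.injEq _ _ _ _).mp hm).2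
      subst this
      rw [← hfull]; exact h
  · rw [← hpre j (le_of_lt hj)]
    exact chknone j hj

theorem simpleMachine_complete {chk : ℕ → List ℕ → Option ℕ} {X : ℕ → ℕ} {n L m : ℕ}
    (h : chk n (List.map X (List.range L)) = some m) :
    ∃ m', HaltsTo (simpleMachine chk) (X : ℕ →. ℕ) n m' := by
  classical
  have hex : ∃ L, (chk n (List.map X (List.range L))).isSome := ⟨L, by rw [h]; rfl⟩
  set L0 := Nat.find hex with hL0
  obtain ⟨m', hm'⟩ := Option.isSome_iff_exists.mp (Nat.find_spec hex)
  refine ⟨m', List.map X (List.range L0), ?_, ?_⟩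
  · intro k hk
    have hk' : k < L0 := by simpa using hk
    have hnone : chk n ((List.map X (List.range L0)).take k) = none := by
      have hmin := Nat.find_min hex hk'
      rw [← List.map_take, List.take_range, min_eq_left (le_of_lt hk')]
      exact Option.not_isSome_iff_eq_none.mp hmin
    refine ⟨k, ?_, ?_⟩
    · rw [simpleMachine_apply, Part.mem_some_iff, hnone, List.length_take]
      congr 2
      simp only [List.length_map, List.length_range] at hk ⊢
      omega
    · simp only [List.length_map, List.length_range] at hk
      simp [Part.mem_some_iff, hk]
  · rw [simpleMachine_apply, Part.mem_some_iff, hm']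

end AntiCup
namespace AntiCup

open Nat.Partrec (Code)
open Nat.Partrec.Code

/-- `pref l i = l.take i`, in a `Primrec`-friendly form. -/
def pref (l : List ℕ) (i : ℕ) : List ℕ := (List.range i).map fun j => l.getD j 0

theorem pref_eq_take {l : List ℕ} {i : ℕ} (h : i ≤ l.length) : pref l i = l.take i := by
  apply List.ext_getElem
  · simp [pref, min_eq_left h]
  · intro j h1 h2
    simp only [pref, List.length_map, List.length_range] at h1
    simp [pref, List.getD, List.getElem?_eq_getElem (lt_of_lt_of_le h1 h)]

def isQueryAt (o : Option (Bool × ℕ)) : Option ℕ :=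
  match o with
  | some (false, qi) => some qi
  | _ => none

theorem isQueryAt_eq_some {o : Option (Bool × ℕ)} {qi : ℕ} :
    isQueryAt o = some qi ↔ o = some (false, qi) := by
  rcases o with _ | ⟨b, m⟩
  · simp [isQueryAt]
  · cases b <;> simp [isQueryAt]

def isHalt (o : Option (Bool × ℕ)) : Bool := ((o.map Prod.fst).getD false)

theorem isHalt_eq_true {o : Option (Bool × ℕ)} (h : isHalt o = true) :
    ∃ m, o = some (true, m) := by
  rcases o with _ | ⟨b, m⟩
  · simp [isHalt] at h
  · cases b
    · simp [isHalt] at h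
    · exact ⟨m, rfl⟩

theorem isHalt_true {m : ℕ} : isHalt (some (true, m)) = true := rfl

/-- The big oracle `α ⊕ (β ⊕ f)`. -/
def bigX (α β f : ℕ → ℕ) : ℕ → ℕ := totalJoin α (totalJoin β f)

/-- The totalization `f ⊕ β` of the oracle `(f↾A) ⊕ β`. -/
def Gor (f β : ℕ → ℕ) : ℕ →. ℕ := ((totalJoin f β : ℕ → ℕ) : ℕ →. ℕ)

/-- The oracle `(f↾A) ⊕ β`. -/
def Oor (f : ℕ → ℕ) (A : Set ℕ) (β : ℕ → ℕ) : ℕ →. ℕ :=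
  PJoin (restrictTo (f : ℕ →. ℕ) A) (β : ℕ →. ℕ)

theorem totalJoin_even (Xa Xb : ℕ → ℕ) (i : ℕ) : totalJoin Xa Xb (2 * i) = Xa i := by
  simp [totalJoin, Nat.mul_div_cancel_left _ (by norm_num : (0:ℕ) < 2), Nat.mul_mod_right]

theorem totalJoin_odd (Xa Xb : ℕ → ℕ) (i : ℕ) : totalJoin Xa Xb (2 * i + 1) = Xb i := by
  have h1 : (2 * i + 1) % 2 = 1 := by omega
  have h2 : (2 * i + 1) / 2 = i := by omega
  simp [totalJoin, h1, h2]

theorem bigX_alpha (α β f : ℕ → ℕ) (i : ℕ) : bigX α β f (2 * i) = α i :=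
  totalJoin_even _ _ _

theorem bigX_beta (α β f : ℕ → ℕ) (i : ℕ) : bigX α β f (4 * i + 1) = β i := by
  have : 4 * i + 1 = 2 * (2 * i) + 1 := by ring
  rw [bigX, this, totalJoin_odd, totalJoin_even]

theorem bigX_f (α β f : ℕ → ℕ) (i : ℕ) : bigX α β f (4 * i + 3) = f i := by
  have : 4 * i + 3 = 2 * (2 * i + 1) + 1 := by ring
  rw [bigX, this, totalJoin_odd, totalJoin_odd]

theorem Gor_even (f β : ℕ → ℕ) (i : ℕ) : Gor f β (2 * i) = Part.some (f i) := by
  simp [Gor, totalJoin_even]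

theorem Gor_odd (f β : ℕ → ℕ) (i : ℕ) : Gor f β (2 * i + 1) = Part.some (β i) := by
  simp [Gor, totalJoin_odd]

theorem Oor_even_mem {f : ℕ → ℕ} {A : Set ℕ} {β : ℕ → ℕ} {q v : ℕ}
    (h : v ∈ Oor f A β q) (hq : q % 2 = 0) : q / 2 ∈ A ∧ v = f (q / 2) := by
  simp only [Oor, PJoin, hq, if_true] at h
  simp only [restrictTo] at h
  by_cases hA : q / 2 ∈ A
  · rw [if_pos hA] at h
    exact ⟨hA, by simpa using h⟩
  · rw [if_neg hA] at h
    exact absurd h (Part.notMem_none v)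

theorem Oor_odd_mem {f : ℕ → ℕ} {A : Set ℕ} {β : ℕ → ℕ} {q v : ℕ}
    (h : v ∈ Oor f A β q) (hq : q % 2 = 1) : v = β (q / 2) := by
  simp only [Oor, PJoin, hq] at h
  simpa using h

theorem Oor_le_Gor {f : ℕ → ℕ} {A : Set ℕ} {β : ℕ → ℕ} (q v : ℕ)
    (h : v ∈ Oor f A β q) : v ∈ Gor f β q := by
  rcases Nat.even_or_odd q with ⟨i, hi⟩ | ⟨i, hi⟩
  · have hq : q % 2 = 0 := by omega
    obtain ⟨_, hv⟩ := Oor_even_mem h hq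
    have : q = 2 * (q / 2) := by omega
    rw [this, Gor_even, Part.mem_some_iff]
    exact hv
  · have hq : q % 2 = 1 := by omega
    have hv := Oor_odd_mem h hq
    have : q = 2 * (q / 2) + 1 := by omega
    rw [this, Gor_odd, Part.mem_some_iff]
    exact hv

theorem Oor_mem_even {f : ℕ → ℕ} {A : Set ℕ} {β : ℕ → ℕ} {i : ℕ} (hi : i ∈ A) :
    f i ∈ Oor f A β (2 * i) := by
  simp [Oor, PJoin, Nat.mul_mod_right, Nat.mul_div_cancel_left _ (by norm_num : (0:ℕ) < 2),
    restrictTo, hi]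

theorem Oor_mem_odd (f : ℕ → ℕ) (A : Set ℕ) (β : ℕ → ℕ) (i : ℕ) :
    β i ∈ Oor f A β (2 * i + 1) := by
  have h1 : (2 * i + 1) % 2 = 1 := by omega
  have h2 : (2 * i + 1) / 2 = i := by omega
  simp [Oor, PJoin, h1, h2]

/-- The set of positions of `f↾A` queried in the canonical total run,
for inputs in the domain of `g`. -/
def Sset (Φ : List ℕ →. Bool × ℕ) (g : ℕ →. ℕ) (f β : ℕ → ℕ) : Set ℕ :=
  { q | ∃ n ag k, n ∈ g.Dom ∧ ValidHist Φ (Gor f β) n ag ∧ k < ag.length ∧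
      (false, 2 * q) ∈ Φ (n :: ag.take k) }

/-- Validity of a history `ad` for the `α`-oracle machine `cd` against the data `as`. -/
def validD (cd : Code) (as : List ℕ) (s n : ℕ) (ad : List ℕ) : Bool :=
  (List.range ad.length).all fun i =>
    ((isQueryAt (qstep cd s (n :: pref ad i))).map fun qi =>
      decide (as[2 * qi]? = some (ad.getD i 0))).getD false

/-- Validity of a history `ag` for the `f ⊕ β`-oracle machine `cφ` against the data `as`. -/
def validG (cφ : Code) (as : List ℕ) (s n : ℕ) (ag : List ℕ) : Bool :=
  (List.range ag.length).all fun i =>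
    ((isQueryAt (qstep cφ s (n :: pref ag i))).map fun qi =>
      decide ((if qi % 2 = 0 then as[2 * qi + 3]? else as[2 * qi - 1]?) =
        some (ag.getD i 0))).getD false

/-- The bounded witness check for the enumeration of `Sset`. -/
def condS (cφ cd : Code) (q : ℕ) (as : List ℕ) (t : ℕ) : Bool :=
  let n := t.unpair.1
  let s := t.unpair.2.unpair.1
  let d := t.unpair.2.unpair.2.unpair.1
  let e := t.unpair.2.unpair.2.unpair.2.unpair.1
  let k := t.unpair.2.unpair.2.unpair.2.unpair.2
  let ad := Denumerable.ofNat (List ℕ) d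
  let ag := Denumerable.ofNat (List ℕ) e
  validD cd as s n ad &&
    isHalt (qstep cd s (n :: ad)) &&
    validG cφ as s n ag &&
    (decide (k < ag.length) && decide (qstep cφ s (n :: pref ag k) = some (false, 2 * q)))

def chkS (cφ cd : Code) (q : ℕ) (as : List ℕ) : Option ℕ :=
  if (List.range as.length).any fun t => condS cφ cd q as t then some 0 else none

end AntiCup
namespace AntiCup

open Nat.Partrec (Code)
open Nat.Partrec.Code

theorem Sset_subset_A {Φ : List ℕ →. Bool × ℕ} {g : ℕ →. ℕ} {f β : ℕ → ℕ} {A : Set ℕ}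
    (hc : ∀ n m, m ∈ g n → HaltsTo Φ (Oor f A β) n m) :
    Sset Φ g f β ⊆ A := by
  rintro q ⟨n, ag, k, hn, hv, hk, hq⟩
  obtain ⟨m, hm⟩ := Part.dom_iff_mem.mp hn
  obtain ⟨as0, hv0, hm0⟩ := hc n m hm
  have hv0G : ValidHist Φ (Gor f β) n as0 := validHist_mono Oor_le_Gor hv0
  obtain ⟨hlen, heq⟩ := validHist_le_halting hv hv0G hm0
  have htake : ag.take k = as0.take k := by
    rw [heq, List.take_take, min_eq_left (le_of_lt hk)]
  rw [htake] at hq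
  have hk0 : k < as0.length := lt_of_lt_of_le hk hlen
  obtain ⟨q', hq', hval⟩ := hv0 k hk0
  have hqq : q' = 2 * q :=
    ((Prod.mk.injEq _ _ _ _).mp (Part.mem_unique hq' hq)).2
  rw [hqq] at hval
  have := Oor_even_mem hval (by omega)
  have h2 : 2 * q / 2 = q := by omega
  rw [h2] at this
  exact this.1

/-- Uniform step bounds for finitely many converging computations. -/
theorem qstep_complete_list {Φ : List ℕ →. Bool × ℕ} {c : Code} (hc : eval c = liftP Φ)
    (F : ℕ → List ℕ) (x : ℕ → Bool × ℕ) (N : ℕ) (h : ∀ i, i < N → x i ∈ Φ (F i)) :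
    ∃ s, ∀ s', s ≤ s' → ∀ i, i < N → qstep c s' (F i) = some (x i) := by
  induction N with
  | zero => exact ⟨0, fun _ _ i hi => absurd hi (Nat.not_lt_zero i)⟩
  | succ N ih =>
    obtain ⟨s1, hs1⟩ := ih fun i hi => h i (Nat.lt_succ_of_lt hi)
    obtain ⟨s2, hs2⟩ := qstep_complete hc (h N (Nat.lt_succ_self N))
    refine ⟨max s1 s2, fun s' hs' i hi => ?_⟩
    rcases Nat.lt_succ_iff_lt_or_eq.mp hi with hi | hi
    · exact hs1 s' (le_trans (le_max_left _ _) hs') i hi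
    · subst hi; exact hs2 s' (le_trans (le_max_right _ _) hs')

theorem bigX_get? {α β f : ℕ → ℕ} {L j v : ℕ}
    (h : (List.map (bigX α β f) (List.range L))[j]? = some v) : v = bigX α β f j := by
  rcases lt_or_ge j L with hj | hj
  · rw [List.getElem?_map, List.getElem?_range hj] at h
    simpa using h.symm
  · rw [List.getElem?_eq_none] at h
    · exact absurd h (by simp)
    · simpa using hj

theorem bigX_get?_of_lt {α β f : ℕ → ℕ} {L j : ℕ} (h : j < L) :
    (List.map (bigX α β f) (List.range L))[j]? = some (bigX α β f j) := by
  rw [List.getElem?_map, List.getElem?_range h]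
  rfl

/-- Soundness of the bounded check: a successful check on genuine oracle data
witnesses membership in `Sset`. -/
theorem condS_sound {Φ Φd : List ℕ →. Bool × ℕ} {cφ cd : Code}
    (hcφ : eval cφ = liftP Φ) (hcd : eval cd = liftP Φd)
    {α β f : ℕ → ℕ} {g : ℕ →. ℕ}
    (hds : ∀ n, n ∈ g.Dom ↔ ∃ m, HaltsTo Φd (α : ℕ →. ℕ) n m)
    {q L t : ℕ} (h : condS cφ cd q (List.map (bigX α β f) (List.range L)) t = true) :
    q ∈ Sset Φ g f β := by
  set as := List.map (bigX α β f) (List.range L) with has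
  set n := t.unpair.1
  set s := t.unpair.2.unpair.1
  set ad := Denumerable.ofNat (List ℕ) t.unpair.2.unpair.2.unpair.1 with had
  set ag := Denumerable.ofNat (List ℕ) t.unpair.2.unpair.2.unpair.2.unpair.1 with hag
  set k := t.unpair.2.unpair.2.unpair.2.unpair.2 with hk
  simp only [condS, validD, validG, Bool.and_eq_true] at h
  obtain ⟨⟨⟨h1, h2⟩, h3⟩, h4, h5⟩ := h
  -- `ad` is a valid history for `Φd` with oracle `α`
  have hvd : ValidHist Φd (α : ℕ →. ℕ) n ad := by
    intro i hi
    have := List.all_eq_true.mp h1 i (List.mem_range.mpr hi)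
    rcases ho : isQueryAt (qstep cd s (n :: pref ad i)) with _ | qi
    · rw [ho] at this; simp at this
    · have hP : as[2 * qi]? = some (ad.getD i 0) := by
        rw [ho] at this; simpa using this
      have hqs : qstep cd s (n :: pref ad i) = some (false, qi) := isQueryAt_eq_some.mp ho
      rw [pref_eq_take (le_of_lt hi)] at hqs
      refine ⟨qi, qstep_sound hcd hqs, ?_⟩
      have hval := bigX_get? hP
      rw [List.getD_eq_getElem ad 0 hi] at hval
      rw [hval, bigX_alpha]
      simp
  -- `Φd` halts on `n :: ad`, so `n ∈ g.Dom`
  have hnd : n ∈ g.Dom := by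
    obtain ⟨m', hm'⟩ := isHalt_eq_true h2
    exact (hds n).mpr ⟨m', ad, hvd, qstep_sound hcd hm'⟩
  -- `ag` is a valid history for `Φ` with oracle `Gor f β`
  have hvg : ValidHist Φ (Gor f β) n ag := by
    intro i hi
    have := List.all_eq_true.mp h3 i (List.mem_range.mpr hi)
    rcases ho : isQueryAt (qstep cφ s (n :: pref ag i)) with _ | qi
    · rw [ho] at this; simp at this
    · have hP : (if qi % 2 = 0 then as[2 * qi + 3]? else as[2 * qi - 1]?) =
          some (ag.getD i 0) := by
        rw [ho] at this; simpa using this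
      have hqs : qstep cφ s (n :: pref ag i) = some (false, qi) := isQueryAt_eq_some.mp ho
      rw [pref_eq_take (le_of_lt hi)] at hqs
      refine ⟨qi, qstep_sound hcφ hqs, ?_⟩
      by_cases hpar : qi % 2 = 0
      · rw [if_pos hpar] at hP
        have hval := bigX_get? hP
        rw [List.getD_eq_getElem ag 0 hi] at hval
        have hrw : 2 * qi + 3 = 4 * (qi / 2) + 3 := by omega
        have hq2 : qi = 2 * (qi / 2) := by omega
        rw [hrw, bigX_f] at hval
        rw [hq2, Gor_even, Part.mem_some_iff]
        exact hval
      · rw [if_neg hpar] at hP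
        have hval := bigX_get? hP
        rw [List.getD_eq_getElem ag 0 hi] at hval
        have hrw : 2 * qi - 1 = 4 * (qi / 2) + 1 := by omega
        have hq2 : qi = 2 * (qi / 2) + 1 := by omega
        rw [hrw, bigX_beta] at hval
        rw [hq2, Gor_odd, Part.mem_some_iff]
        exact hval
  -- the query `2 * q` occurs
  have hk' : k < ag.length := of_decide_eq_true h4
  have hq5 : qstep cφ s (n :: pref ag k) = some (false, 2 * q) := of_decide_eq_true h5
  rw [pref_eq_take (le_of_lt hk')] at hq5
  exact ⟨n, ag, k, hnd, hvg, hk', qstep_sound hcφ hq5⟩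

end AntiCup
namespace AntiCup

open Nat.Partrec (Code)
open Nat.Partrec.Code

theorem condS_complete {Φ Φd : List ℕ →. Bool × ℕ} {cφ cd : Code}
    (hcφ : eval cφ = liftP Φ) (hcd : eval cd = liftP Φd)
    {α β f : ℕ → ℕ} {g : ℕ →. ℕ}
    (hds : ∀ n, n ∈ g.Dom ↔ ∃ m, HaltsTo Φd (α : ℕ →. ℕ) n m)
    {q : ℕ} (hq : q ∈ Sset Φ g f β) :
    ∃ L t, t < L ∧ condS cφ cd q (List.map (bigX α β f) (List.range L)) t = true := by
  classical
  obtain ⟨n, ag, k, hn, hvg, hk, hq2⟩ := hq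
  obtain ⟨m', ad, hvd, hhd⟩ := (hds n).mp hn
  -- the queries of the two histories
  have qdspec : ∀ i (hi : i < ad.length), ∃ qi,
      (false, qi) ∈ Φd (n :: ad.take i) ∧ (ad[i]'hi) ∈ (α : ℕ →. ℕ) qi := hvd
  have qgspec : ∀ i (hi : i < ag.length), ∃ qi,
      (false, qi) ∈ Φ (n :: ag.take i) ∧ (ag[i]'hi) ∈ Gor f β qi := hvg
  set qd : ℕ → ℕ := fun i => if hi : i < ad.length then (qdspec i hi).choose else 0 with hqd
  set qg : ℕ → ℕ := fun i => if hi : i < ag.length then (qgspec i hi).choose else 0 with hqg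
  have qdmem : ∀ i (hi : i < ad.length),
      (false, qd i) ∈ Φd (n :: ad.take i) ∧ (ad[i]'hi) = α (qd i) := by
    intro i hi
    have := (qdspec i hi).choose_spec
    simp only [hqd, dif_pos hi]
    exact ⟨this.1, by simpa using this.2⟩
  have qgmem : ∀ i (hi : i < ag.length),
      (false, qg i) ∈ Φ (n :: ag.take i) ∧ (ag[i]'hi) ∈ Gor f β (qg i) := by
    intro i hi
    have := (qgspec i hi).choose_spec
    simp only [hqg, dif_pos hi]
    exact this
  -- the crucial identification: the query at round `k` is `2 * q`
  have hqk : qg k = 2 * q := by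
    have h1 := (qgmem k hk).1
    have := Part.mem_unique h1 hq2
    exact ((Prod.mk.injEq _ _ _ _).mp this).2
  -- uniform step bounds
  obtain ⟨s1, hs1⟩ := qstep_complete_list hcd (fun i => n :: ad.take i)
    (fun i => (false, qd i)) ad.length (fun i hi => (qdmem i hi).1)
  obtain ⟨s2, hs2⟩ := qstep_complete hcd hhd
  obtain ⟨s3, hs3⟩ := qstep_complete_list hcφ (fun i => n :: ag.take i)
    (fun i => (false, qg i)) ag.length (fun i hi => (qgmem i hi).1)
  set s := max s1 (max s2 s3) with hs
  have hs1' := hs1 s (le_max_left _ _)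
  have hs2' := hs2 s (le_trans (le_max_left _ _) (le_max_right _ _))
  have hs3' := hs3 s (le_trans (le_max_right _ _) (le_max_right _ _))
  -- the witness and the data bound
  set t := Nat.pair n (Nat.pair s (Nat.pair (Encodable.encode ad)
    (Nat.pair (Encodable.encode ag) k))) with ht
  set Bd := (Finset.range ad.length).sup fun i => 2 * qd i + 1 with hBd
  set Bg := (Finset.range ag.length).sup fun i => 2 * qg i + 4 with hBg
  set L := t + Bd + Bg + 1 with hL
  set as := List.map (bigX α β f) (List.range L) with has
  refine ⟨L, t, by omega, ?_⟩
  have hBd' : ∀ i, i < ad.length → 2 * qd i < L := by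
    intro i hi
    have h2 : 2 * qd i + 1 ≤ Bd := by
      rw [hBd]; exact Finset.le_sup (f := fun i => 2 * qd i + 1) (Finset.mem_range.mpr hi)
    omega
  have hBg' : ∀ i, i < ag.length → 2 * qg i + 3 < L := by
    intro i hi
    have h2 : 2 * qg i + 4 ≤ Bg := by
      rw [hBg]; exact Finset.le_sup (f := fun i => 2 * qg i + 4) (Finset.mem_range.mpr hi)
    omega
  simp only [condS, validD, validG, ht, Nat.unpair_pair, Denumerable.ofNat_encode]
  rw [Bool.and_eq_true, Bool.and_eq_true, Bool.and_eq_true, Bool.and_eq_true]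
  refine ⟨⟨⟨?_, ?_⟩, ?_⟩, ?_, ?_⟩
  · -- validity of ad against the data
    rw [List.all_eq_true]
    intro i hi'
    have hi := List.mem_range.mp hi'
    rw [pref_eq_take (le_of_lt hi), hs1' i hi, isQueryAt_eq_some.mpr rfl]
    simp only [Option.map_some, Option.getD_some, decide_eq_true_eq]
    rw [← has, bigX_get?_of_lt (hBd' i hi), bigX_alpha, List.getD_eq_getElem ad 0 hi,
      (qdmem i hi).2]
  · -- Φd halts
    rw [hs2', isHalt_true]
  · -- validity of ag against the data
    rw [List.all_eq_true]
    intro i hi'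
    have hi := List.mem_range.mp hi'
    rw [pref_eq_take (le_of_lt hi), hs3' i hi, isQueryAt_eq_some.mpr rfl]
    simp only [Option.map_some, Option.getD_some, decide_eq_true_eq]
    have hmem := (qgmem i hi).2
    by_cases hpar : qg i % 2 = 0
    · rw [if_pos hpar]
      have h2 : qg i = 2 * (qg i / 2) := by omega
      rw [h2, Gor_even, Part.mem_some_iff] at hmem
      have hidx : 2 * qg i + 3 = 4 * (qg i / 2) + 3 := by omega
      rw [← has, bigX_get?_of_lt (hBg' i hi), hidx, bigX_f, List.getD_eq_getElem ag 0 hi, hmem]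
    · rw [if_neg hpar]
      have h2 : qg i = 2 * (qg i / 2) + 1 := by omega
      rw [h2, Gor_odd, Part.mem_some_iff] at hmem
      have hidx : 2 * qg i - 1 = 4 * (qg i / 2) + 1 := by omega
      have hlt : 2 * qg i - 1 < L := by have := hBg' i hi; omega
      rw [← has, bigX_get?_of_lt hlt, hidx, bigX_beta, List.getD_eq_getElem ag 0 hi, hmem]
  · exact decide_eq_true hk
  · rw [pref_eq_take (le_of_lt hk), hs3' k hk, hqk]
    exact decide_eq_true rfl

end AntiCup
namespace AntiCup

open Nat.Partrec (Code)
open Nat.Partrec.Code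

theorem mapRange_getElem? {X : ℕ → ℕ} {L j v : ℕ}
    (h : (List.map X (List.range L))[j]? = some v) : v = X j := by
  rcases lt_or_ge j L with hj | hj
  · rw [List.getElem?_map, List.getElem?_range hj] at h
    simpa using h.symm
  · rw [List.getElem?_eq_none] at h
    · exact absurd h (by simp)
    · simpa using hj

theorem mapRange_getElem?_of_lt {X : ℕ → ℕ} {L j : ℕ} (h : j < L) :
    (List.map X (List.range L))[j]? = some (X j) := by
  rw [List.getElem?_map, List.getElem?_range h]; rfl

def lookupL : List (ℕ × ℕ) → ℕ → Option ℕ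
  | [], _ => none
  | p :: t, q => if q = p.1 then some p.2 else lookupL t q

theorem lookupL_map (l : List ℕ) (h : ℕ → ℕ) (q : ℕ) :
    lookupL (l.map fun a => (a, h a)) q = if q ∈ l then some (h q) else none := by
  induction l with
  | nil => rfl
  | cons a t ih =>
    simp only [List.map_cons, lookupL]
    by_cases hqa : q = a
    · subst hqa; simp
    · simp only [hqa, if_false, ih, List.mem_cons]
      by_cases hqt : q ∈ t <;> simp [hqt, hqa]

/-- One step of the simulation of `Φ` with the finite table `Lf` for even queries
and the oracle data `bs` for odd queries. -/
def stepM (cφ : Code) (Lf : List (ℕ × ℕ)) (n : ℕ) (bs : List ℕ)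
    (st : Option (ℕ ⊕ List ℕ)) : Option (ℕ ⊕ List ℕ) :=
  match st with
  | some (Sum.inr h) =>
    match qstep cφ bs.length (n :: h) with
    | some (true, m) => some (Sum.inl m)
    | some (false, qi) =>
      if qi % 2 = 0 then
        match lookupL Lf (qi / 2) with
        | some v => some (Sum.inr (h ++ [v]))
        | none => none
      else
        match bs[qi / 2]? with
        | some b => some (Sum.inr (h ++ [b]))
        | none => none
    | none => none
  | st => st

def simM (cφ : Code) (Lf : List (ℕ × ℕ)) (n : ℕ) (bs : List ℕ) : ℕ → Option (ℕ ⊕ List ℕ) :=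
  fun j => Nat.rec (some (Sum.inr [])) (fun _ st => stepM cφ Lf n bs st) j

theorem simM_succ (cφ : Code) (Lf : List (ℕ × ℕ)) (n : ℕ) (bs : List ℕ) (j : ℕ) :
    simM cφ Lf n bs (j + 1) = stepM cφ Lf n bs (simM cφ Lf n bs j) := rfl

def chkM (cφ : Code) (Lf : List (ℕ × ℕ)) (n : ℕ) (bs : List ℕ) : Option ℕ :=
  match simM cφ Lf n bs bs.length with
  | some (Sum.inl m) => some m
  | _ => none

theorem stepM_inl (cφ : Code) (Lf : List (ℕ × ℕ)) (n : ℕ) (bs : List ℕ) (m : ℕ) :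
    stepM cφ Lf n bs (some (Sum.inl m)) = some (Sum.inl m) := rfl

theorem stepM_none (cφ : Code) (Lf : List (ℕ × ℕ)) (n : ℕ) (bs : List ℕ) :
    stepM cφ Lf n bs none = none := rfl

section Sound

variable {Φ : List ℕ →. Bool × ℕ} {cφ : Code} {Lf : List (ℕ × ℕ)}
  {f β : ℕ → ℕ} {A : Set ℕ} {n K : ℕ}

theorem simM_sound (hcφ : eval cφ = liftP Φ)
    (hLf : ∀ i v, lookupL Lf i = some v → i ∈ A ∧ v = f i) (j : ℕ) :
    (∀ h, simM cφ Lf n (List.map β (List.range K)) j = some (Sum.inr h) →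
      ValidHist Φ (Oor f A β) n h) ∧
    (∀ m, simM cφ Lf n (List.map β (List.range K)) j = some (Sum.inl m) →
      HaltsTo Φ (Oor f A β) n m) := by
  set bs := List.map β (List.range K) with hbs
  induction j with
  | zero =>
    constructor
    · intro h hh
      have : ([] : List ℕ) = h := by simpa [simM] using hh
      subst this
      intro k hk
      simp at hk
    · intro m hm
      simp [simM] at hm
  | succ j ih =>
    rw [simM_succ]
    rcases hst : simM cφ Lf n bs j with _ | st
    · rw [stepM_none]
      exact ⟨fun h hh => absurd hh (by simp), fun m hm => absurd hm (by simp)⟩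
    rcases st with m | h
    · rw [stepM_inl]
      exact ⟨fun h hh => absurd hh (by simp),
        fun m' hm' => by
          have : m = m' := by simpa using hm'
          subst this
          exact ih.2 m hst⟩
    · have hval : ValidHist Φ (Oor f A β) n h := ih.1 h hst
      rcases hq : qstep cφ bs.length (n :: h) with _ | ⟨b, qi⟩
      · rw [show stepM cφ Lf n bs (some (Sum.inr h)) = none by simp [stepM, hq]]
        exact ⟨fun h hh => absurd hh (by simp), fun m hm => absurd hm (by simp)⟩
      have hqmem := qstep_sound hcφ hq
      cases b
      · -- a query
        by_cases hpar : qi % 2 = 0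
        · rcases hl : lookupL Lf (qi / 2) with _ | v
          · rw [show stepM cφ Lf n bs (some (Sum.inr h)) = none by simp [stepM, hq, hpar, hl]]
            exact ⟨fun h hh => absurd hh (by simp), fun m hm => absurd hm (by simp)⟩
          · rw [show stepM cφ Lf n bs (some (Sum.inr h)) = some (Sum.inr (h ++ [v])) by
              simp [stepM, hq, hpar, hl]]
            refine ⟨fun h' hh' => ?_, fun m hm => absurd hm (by simp)⟩
            have : h ++ [v] = h' := by simpa using hh'
            subst this
            obtain ⟨hA, hv⟩ := hLf _ _ hl
            have hq2 : qi = 2 * (qi / 2) := by omega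
            refine validHist_snoc hval hqmem ?_
            have hmem : f (qi / 2) ∈ Oor f A β (2 * (qi / 2)) := Oor_mem_even hA
            rw [← hq2] at hmem
            rw [hv]
            exact hmem
        · rcases hl : bs[qi / 2]? with _ | v
          · rw [show stepM cφ Lf n bs (some (Sum.inr h)) = none by simp [stepM, hq, hpar, hl]]
            exact ⟨fun h hh => absurd hh (by simp), fun m hm => absurd hm (by simp)⟩
          · rw [show stepM cφ Lf n bs (some (Sum.inr h)) = some (Sum.inr (h ++ [v])) by
              simp [stepM, hq, hpar, hl]]
            refine ⟨fun h' hh' => ?_, fun m hm => absurd hm (by simp)⟩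
            have : h ++ [v] = h' := by simpa using hh'
            subst this
            have hv : v = β (qi / 2) := mapRange_getElem? hl
            have hq2 : qi = 2 * (qi / 2) + 1 := by omega
            refine validHist_snoc hval hqmem ?_
            have hmem : β (qi / 2) ∈ Oor f A β (2 * (qi / 2) + 1) := Oor_mem_odd f A β (qi / 2)
            rw [← hq2] at hmem
            rw [hv]
            exact hmem
      · -- halting
        rw [show stepM cφ Lf n bs (some (Sum.inr h)) = some (Sum.inl qi) by simp [stepM, hq]]
        refine ⟨fun h' hh' => absurd hh' (by simp), fun m hm => ?_⟩
        have : qi = m := by simpa using hm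
        subst this
        exact ⟨h, hval, hqmem⟩

theorem chkM_sound (hcφ : eval cφ = liftP Φ)
    (hLf : ∀ i v, lookupL Lf i = some v → i ∈ A ∧ v = f i) {m : ℕ}
    (h : chkM cφ Lf n (List.map β (List.range K)) = some m) :
    HaltsTo Φ (Oor f A β) n m := by
  unfold chkM at h
  rcases hst : simM cφ Lf n (List.map β (List.range K))
      (List.map β (List.range K)).length with _ | st
  · rw [hst] at h; simp at h
  rcases st with m' | h'
  · rw [hst] at h
    have : m' = m := by simpa using h
    subst this
    exact (simM_sound hcφ hLf _).2 m' hst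
  · rw [hst] at h; simp at h

end Sound

end AntiCup
namespace AntiCup

open Nat.Partrec (Code)
open Nat.Partrec.Code

theorem chkM_complete {Φ : List ℕ →. Bool × ℕ} {cφ : Code} {Lf : List (ℕ × ℕ)}
    {f β : ℕ → ℕ} {A : Set ℕ} {n m : ℕ} {as0 : List ℕ}
    (hcφ : eval cφ = liftP Φ)
    (hv0 : ValidHist Φ (Oor f A β) n as0) (hm0 : (true, m) ∈ Φ (n :: as0))
    (hLf2 : ∀ j, j < as0.length → ∀ qi, (false, qi) ∈ Φ (n :: as0.take j) → qi % 2 = 0 →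
      lookupL Lf (qi / 2) = some (f (qi / 2))) :
    ∃ K, chkM cφ Lf n (List.map β (List.range K)) = some m := by
  classical
  -- choose queries
  set qa : ℕ → ℕ := fun j => if hj : j < as0.length then (hv0 j hj).choose else 0 with hqa
  have qamem : ∀ j (hj : j < as0.length),
      (false, qa j) ∈ Φ (n :: as0.take j) ∧ (as0[j]'hj) ∈ Oor f A β (qa j) := by
    intro j hj
    have := (hv0 j hj).choose_spec
    simp only [hqa, dif_pos hj]
    exact this
  -- uniform fuel
  obtain ⟨s1, hs1⟩ := qstep_complete_list hcφ (fun j => n :: as0.take j)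
    (fun j => (false, qa j)) as0.length (fun j hj => (qamem j hj).1)
  obtain ⟨s2, hs2⟩ := qstep_complete hcφ hm0
  set Bq := (Finset.range as0.length).sup fun j => qa j / 2 + 1 with hBq
  set K := max (max s1 s2) (max (as0.length + 1) Bq) with hK
  have hKs1 : s1 ≤ K := le_trans (le_max_left _ _) (le_max_left _ _)
  have hKs2 : s2 ≤ K := le_trans (le_max_right _ _) (le_max_left _ _)
  have hKlen : as0.length + 1 ≤ K := le_trans (le_max_left _ _) (le_max_right _ _)
  have hKB : Bq ≤ K := le_trans (le_max_right _ _) (le_max_right _ _)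
  set bs := List.map β (List.range K) with hbs
  have hbslen : bs.length = K := by simp [hbs]
  refine ⟨K, ?_⟩
  -- the simulation follows `as0`
  have main : ∀ j, j ≤ as0.length → simM cφ Lf n bs j = some (Sum.inr (as0.take j)) := by
    intro j
    induction j with
    | zero => intro _; simp [simM]
    | succ j ih =>
      intro hj
      have hjlt : j < as0.length := Nat.lt_of_succ_le hj
      rw [simM_succ, ih (le_of_lt hjlt)]
      have hq : qstep cφ bs.length (n :: as0.take j) = some (false, qa j) := by
        rw [hbslen]; exact hs1 K hKs1 j hjlt
      obtain ⟨_, hmem⟩ := qamem j hjlt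
      by_cases hpar : qa j % 2 = 0
      · obtain ⟨hA, hval⟩ := Oor_even_mem hmem hpar
        have hl : lookupL Lf (qa j / 2) = some (f (qa j / 2)) :=
          hLf2 j hjlt (qa j) (qamem j hjlt).1 hpar
        rw [show stepM cφ Lf n bs (some (Sum.inr (as0.take j))) =
            some (Sum.inr (as0.take j ++ [f (qa j / 2)])) by simp [stepM, hq, hpar, hl]]
        congr 2
        rw [List.take_succ, List.getElem?_eq_getElem hjlt, hval]
        rfl
      · have hlt : qa j / 2 < K := by
          have h2 : qa j / 2 + 1 ≤ Bq := by
            rw [hBq]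
            exact Finset.le_sup (f := fun j => qa j / 2 + 1) (Finset.mem_range.mpr hjlt)
          omega
        have hl : bs[qa j / 2]? = some (β (qa j / 2)) := mapRange_getElem?_of_lt hlt
        have hval : (as0[j]'hjlt) = β (qa j / 2) := Oor_odd_mem hmem (by omega)
        rw [show stepM cφ Lf n bs (some (Sum.inr (as0.take j))) =
            some (Sum.inr (as0.take j ++ [β (qa j / 2)])) by simp [stepM, hq, hpar, hl]]
        congr 2
        rw [List.take_succ, List.getElem?_eq_getElem hjlt, hval]
        rfl
  -- the halting step
  have hhalt : simM cφ Lf n bs (as0.length + 1) = some (Sum.inl m) := by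
    rw [simM_succ, main as0.length le_rfl, List.take_length]
    have hq : qstep cφ bs.length (n :: as0) = some (true, m) := by
      rw [hbslen]; exact hs2 K hKs2
    simp [stepM, hq]
  -- absorbing
  have habs : ∀ i, simM cφ Lf n bs (as0.length + 1 + i) = some (Sum.inl m) := by
    intro i
    induction i with
    | zero => exact hhalt
    | succ i ih => rw [show as0.length + 1 + (i + 1) = (as0.length + 1 + i) + 1 by omega,
        simM_succ, ih, stepM_inl]
  have : simM cφ Lf n bs K = some (Sum.inl m) := by
    have := habs (K - (as0.length + 1))
    rwa [show as0.length + 1 + (K - (as0.length + 1)) = K by omega] at this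
  rw [chkM, hbslen, this]

end AntiCup
namespace AntiCup

open Nat.Partrec (Code)
open Nat.Partrec.Code

theorem primrec_range_all {α : Type} [Primcodable α] {n : α → ℕ} {p : α → ℕ → Bool}
    (hn : Primrec n) (hp : Primrec₂ p) : Primrec fun a => (List.range (n a)).all (p a) := by
  have h1 : Primrec fun a => (List.range (n a)).foldr (fun b r => p a b && r) true :=
    Primrec.list_foldr (Primrec.list_range.comp hn) (Primrec.const true)
      (Primrec₂.comp Primrec.and (hp.comp Primrec.fst (Primrec.fst.comp Primrec.snd))
        (Primrec.snd.comp Primrec.snd)).to₂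
  refine h1.of_eq fun a => ?_
  generalize List.range (n a) = l
  induction l with
  | nil => rfl
  | cons b t ih => simp [ih]

theorem primrec_range_any {α : Type} [Primcodable α] {n : α → ℕ} {p : α → ℕ → Bool}
    (hn : Primrec n) (hp : Primrec₂ p) : Primrec fun a => (List.range (n a)).any (p a) := by
  have h1 : Primrec fun a => (List.range (n a)).foldr (fun b r => p a b || r) false :=
    Primrec.list_foldr (Primrec.list_range.comp hn) (Primrec.const false)
      (Primrec₂.comp Primrec.or (hp.comp Primrec.fst (Primrec.fst.comp Primrec.snd))
        (Primrec.snd.comp Primrec.snd)).to₂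
  refine h1.of_eq fun a => ?_
  generalize List.range (n a) = l
  induction l with
  | nil => rfl
  | cons b t ih => simp [ih]

theorem primrec_pref : Primrec₂ pref :=
  Primrec.list_map (Primrec.list_range.comp Primrec.snd)
    ((Primrec.list_getD 0).comp (Primrec.fst.comp Primrec.fst) Primrec.snd).to₂

theorem primrec_qstep (c : Code) : Primrec₂ fun (s : ℕ) (L : List ℕ) => qstep c s L := by
  have h1 : Primrec fun p : ℕ × List ℕ => evaln p.1 c (Encodable.encode p.2) :=
    primrec_evaln.comp ((Primrec.fst.pair (Primrec.const c)).pair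
      (Primrec.encode.comp Primrec.snd))
  exact (Primrec.option_bind h1 (Primrec.decode.comp Primrec.snd).to₂).to₂

theorem primrec_isQueryAt : Primrec isQueryAt := by
  have h : Primrec fun o : Option (Bool × ℕ) =>
      o.bind fun p => bif p.1 then none else some p.2 :=
    Primrec.option_bind Primrec.id
      ((Primrec.cond (Primrec.fst.comp Primrec.snd) (Primrec.const none)
        (Primrec.option_some.comp (Primrec.snd.comp Primrec.snd))).to₂)
  refine h.of_eq fun o => ?_
  rcases o with _ | ⟨b, m⟩
  · rfl
  · cases b <;> rfl

theorem primrec_isHalt : Primrec isHalt :=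
  Primrec₂.comp Primrec.option_getD
    (Primrec.option_map Primrec.id (Primrec.fst.comp Primrec.snd).to₂) (Primrec.const false)

theorem primrec_validD (c : Code) :
    Primrec fun x : (List ℕ × ℕ × ℕ) × List ℕ => validD c x.1.1 x.1.2.1 x.1.2.2 x.2 := by
  have H : Primrec fun x : (List ℕ × ℕ × ℕ) × List ℕ =>
      (List.range x.2.length).all fun i =>
        ((isQueryAt (qstep c x.1.2.1 (x.1.2.2 :: pref x.2 i))).map fun qi =>
          decide (x.1.1[2 * qi]? = some (x.2.getD i 0))).getD false := by
    refine primrec_range_all (Primrec.list_length.comp Primrec.snd) ?_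
    -- the inner predicate, over y : ((List ℕ × ℕ × ℕ) × List ℕ) × ℕ
    have hs : Primrec fun y : ((List ℕ × ℕ × ℕ) × List ℕ) × ℕ => y.1.1.2.1 :=
      Primrec.fst.comp (Primrec.snd.comp (Primrec.fst.comp Primrec.fst))
    have hn : Primrec fun y : ((List ℕ × ℕ × ℕ) × List ℕ) × ℕ => y.1.1.2.2 :=
      Primrec.snd.comp (Primrec.snd.comp (Primrec.fst.comp Primrec.fst))
    have had : Primrec fun y : ((List ℕ × ℕ × ℕ) × List ℕ) × ℕ => y.1.2 :=
      Primrec.snd.comp Primrec.fst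
    have hi : Primrec fun y : ((List ℕ × ℕ × ℕ) × List ℕ) × ℕ => y.2 := Primrec.snd
    have ho : Primrec fun y : ((List ℕ × ℕ × ℕ) × List ℕ) × ℕ =>
        isQueryAt (qstep c y.1.1.2.1 (y.1.1.2.2 :: pref y.1.2 y.2)) :=
      primrec_isQueryAt.comp ((primrec_qstep c).comp hs
        (Primrec.list_cons.comp hn (primrec_pref.comp had hi)))
    have hg : Primrec₂ fun (y : ((List ℕ × ℕ × ℕ) × List ℕ) × ℕ) (qi : ℕ) =>
        decide (y.1.1.1[2 * qi]? = some (y.1.2.getD y.2 0)) := by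
      have hlhs : Primrec fun z : (((List ℕ × ℕ × ℕ) × List ℕ) × ℕ) × ℕ =>
          z.1.1.1.1[2 * z.2]? :=
        Primrec.list_getElem?.comp
          (Primrec.fst.comp (Primrec.fst.comp (Primrec.fst.comp Primrec.fst)))
          (Primrec₂.comp Primrec.nat_mul (Primrec.const 2) Primrec.snd)
      have hrhs : Primrec fun z : (((List ℕ × ℕ × ℕ) × List ℕ) × ℕ) × ℕ =>
          (some (z.1.1.2.getD z.1.2 0) : Option ℕ) :=
        Primrec.option_some.comp ((Primrec.list_getD 0).comp
          (Primrec.snd.comp (Primrec.fst.comp Primrec.fst)) (Primrec.snd.comp Primrec.fst))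
      exact (PrimrecRel.comp Primrec.eq hlhs hrhs).decide.to₂
    exact Primrec₂.comp Primrec.option_getD (Primrec.option_map ho hg) (Primrec.const false)
  exact H.of_eq fun x => rfl

end AntiCup
namespace AntiCup

open Nat.Partrec (Code)
open Nat.Partrec.Code

theorem primrec_validG (c : Code) :
    Primrec fun x : (List ℕ × ℕ × ℕ) × List ℕ => validG c x.1.1 x.1.2.1 x.1.2.2 x.2 := by
  have H : Primrec fun x : (List ℕ × ℕ × ℕ) × List ℕ =>
      (List.range x.2.length).all fun i =>
        ((isQueryAt (qstep c x.1.2.1 (x.1.2.2 :: pref x.2 i))).map fun qi =>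
          decide ((if qi % 2 = 0 then x.1.1[2 * qi + 3]? else x.1.1[2 * qi - 1]?) =
            some (x.2.getD i 0))).getD false := by
    refine primrec_range_all (Primrec.list_length.comp Primrec.snd) ?_
    have hs : Primrec fun y : ((List ℕ × ℕ × ℕ) × List ℕ) × ℕ => y.1.1.2.1 :=
      Primrec.fst.comp (Primrec.snd.comp (Primrec.fst.comp Primrec.fst))
    have hn : Primrec fun y : ((List ℕ × ℕ × ℕ) × List ℕ) × ℕ => y.1.1.2.2 :=
      Primrec.snd.comp (Primrec.snd.comp (Primrec.fst.comp Primrec.fst))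
    have had : Primrec fun y : ((List ℕ × ℕ × ℕ) × List ℕ) × ℕ => y.1.2 :=
      Primrec.snd.comp Primrec.fst
    have hi : Primrec fun y : ((List ℕ × ℕ × ℕ) × List ℕ) × ℕ => y.2 := Primrec.snd
    have ho : Primrec fun y : ((List ℕ × ℕ × ℕ) × List ℕ) × ℕ =>
        isQueryAt (qstep c y.1.1.2.1 (y.1.1.2.2 :: pref y.1.2 y.2)) :=
      primrec_isQueryAt.comp ((primrec_qstep c).comp hs
        (Primrec.list_cons.comp hn (primrec_pref.comp had hi)))
    have hg : Primrec₂ fun (y : ((List ℕ × ℕ × ℕ) × List ℕ) × ℕ) (qi : ℕ) =>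
        decide ((if qi % 2 = 0 then y.1.1.1[2 * qi + 3]? else y.1.1.1[2 * qi - 1]?) =
          some (y.1.2.getD y.2 0)) := by
      have hasz : Primrec fun z : (((List ℕ × ℕ × ℕ) × List ℕ) × ℕ) × ℕ => z.1.1.1.1 :=
        Primrec.fst.comp (Primrec.fst.comp (Primrec.fst.comp Primrec.fst))
      have hqi : Primrec fun z : (((List ℕ × ℕ × ℕ) × List ℕ) × ℕ) × ℕ => z.2 := Primrec.snd
      have hcnd : PrimrecPred fun z : (((List ℕ × ℕ × ℕ) × List ℕ) × ℕ) × ℕ =>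
          z.2 % 2 = 0 :=
        PrimrecRel.comp Primrec.eq
          (Primrec₂.comp Primrec.nat_mod hqi (Primrec.const 2)) (Primrec.const 0)
      have hlhs : Primrec fun z : (((List ℕ × ℕ × ℕ) × List ℕ) × ℕ) × ℕ =>
          if z.2 % 2 = 0 then z.1.1.1.1[2 * z.2 + 3]? else z.1.1.1.1[2 * z.2 - 1]? :=
        Primrec.ite hcnd
          (Primrec.list_getElem?.comp hasz (Primrec₂.comp Primrec.nat_add
            (Primrec₂.comp Primrec.nat_mul (Primrec.const 2) hqi) (Primrec.const 3)))
          (Primrec.list_getElem?.comp hasz (Primrec₂.comp Primrec.nat_sub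
            (Primrec₂.comp Primrec.nat_mul (Primrec.const 2) hqi) (Primrec.const 1)))
      have hrhs : Primrec fun z : (((List ℕ × ℕ × ℕ) × List ℕ) × ℕ) × ℕ =>
          (some (z.1.1.2.getD z.1.2 0) : Option ℕ) :=
        Primrec.option_some.comp ((Primrec.list_getD 0).comp
          (Primrec.snd.comp (Primrec.fst.comp Primrec.fst)) (Primrec.snd.comp Primrec.fst))
      exact (PrimrecRel.comp Primrec.eq hlhs hrhs).decide.to₂
    exact Primrec₂.comp Primrec.option_getD (Primrec.option_map ho hg) (Primrec.const false)
  exact H.of_eq fun x => rfl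

theorem primrec_condS (cφ cd : Code) :
    Primrec₂ fun (p : ℕ × List ℕ) (t : ℕ) => condS cφ cd p.1 p.2 t := by
  have hq : Primrec fun x : (ℕ × List ℕ) × ℕ => x.1.1 := Primrec.fst.comp Primrec.fst
  have has : Primrec fun x : (ℕ × List ℕ) × ℕ => x.1.2 := Primrec.snd.comp Primrec.fst
  have ht : Primrec fun x : (ℕ × List ℕ) × ℕ => x.2 := Primrec.snd
  have hn : Primrec fun x : (ℕ × List ℕ) × ℕ => x.2.unpair.1 :=
    Primrec.fst.comp (Primrec.unpair.comp ht)
  have ht2 : Primrec fun x : (ℕ × List ℕ) × ℕ => x.2.unpair.2 :=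
    Primrec.snd.comp (Primrec.unpair.comp ht)
  have hs : Primrec fun x : (ℕ × List ℕ) × ℕ => x.2.unpair.2.unpair.1 :=
    Primrec.fst.comp (Primrec.unpair.comp ht2)
  have ht3 : Primrec fun x : (ℕ × List ℕ) × ℕ => x.2.unpair.2.unpair.2 :=
    Primrec.snd.comp (Primrec.unpair.comp ht2)
  have hd : Primrec fun x : (ℕ × List ℕ) × ℕ => x.2.unpair.2.unpair.2.unpair.1 :=
    Primrec.fst.comp (Primrec.unpair.comp ht3)
  have ht4 : Primrec fun x : (ℕ × List ℕ) × ℕ => x.2.unpair.2.unpair.2.unpair.2 :=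
    Primrec.snd.comp (Primrec.unpair.comp ht3)
  have he : Primrec fun x : (ℕ × List ℕ) × ℕ => x.2.unpair.2.unpair.2.unpair.2.unpair.1 :=
    Primrec.fst.comp (Primrec.unpair.comp ht4)
  have hk : Primrec fun x : (ℕ × List ℕ) × ℕ => x.2.unpair.2.unpair.2.unpair.2.unpair.2 :=
    Primrec.snd.comp (Primrec.unpair.comp ht4)
  have had : Primrec fun x : (ℕ × List ℕ) × ℕ =>
      Denumerable.ofNat (List ℕ) x.2.unpair.2.unpair.2.unpair.1 :=
    (Primrec.ofNat (List ℕ)).comp hd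
  have hag : Primrec fun x : (ℕ × List ℕ) × ℕ =>
      Denumerable.ofNat (List ℕ) x.2.unpair.2.unpair.2.unpair.2.unpair.1 :=
    (Primrec.ofNat (List ℕ)).comp he
  have hc1 : Primrec fun x : (ℕ × List ℕ) × ℕ =>
      validD cd x.1.2 x.2.unpair.2.unpair.1 x.2.unpair.1
        (Denumerable.ofNat (List ℕ) x.2.unpair.2.unpair.2.unpair.1) :=
    (primrec_validD cd).comp ((has.pair (hs.pair hn)).pair had)
  have hc2 : Primrec fun x : (ℕ × List ℕ) × ℕ =>
      isHalt (qstep cd x.2.unpair.2.unpair.1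
        (x.2.unpair.1 :: Denumerable.ofNat (List ℕ) x.2.unpair.2.unpair.2.unpair.1)) :=
    primrec_isHalt.comp ((primrec_qstep cd).comp hs (Primrec.list_cons.comp hn had))
  have hc3 : Primrec fun x : (ℕ × List ℕ) × ℕ =>
      validG cφ x.1.2 x.2.unpair.2.unpair.1 x.2.unpair.1
        (Denumerable.ofNat (List ℕ) x.2.unpair.2.unpair.2.unpair.2.unpair.1) :=
    (primrec_validG cφ).comp ((has.pair (hs.pair hn)).pair hag)
  have hc4a : Primrec fun x : (ℕ × List ℕ) × ℕ =>
      decide (x.2.unpair.2.unpair.2.unpair.2.unpair.2 <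
        (Denumerable.ofNat (List ℕ) x.2.unpair.2.unpair.2.unpair.2.unpair.1).length) :=
    PrimrecPred.decide <| PrimrecRel.comp Primrec.nat_lt hk (Primrec.list_length.comp hag)
  have hc4b : Primrec fun x : (ℕ × List ℕ) × ℕ =>
      decide (qstep cφ x.2.unpair.2.unpair.1
        (x.2.unpair.1 :: pref (Denumerable.ofNat (List ℕ) x.2.unpair.2.unpair.2.unpair.2.unpair.1)
          x.2.unpair.2.unpair.2.unpair.2.unpair.2) = some (false, 2 * x.1.1)) :=
    PrimrecPred.decide <| PrimrecRel.comp Primrec.eq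
      ((primrec_qstep cφ).comp hs (Primrec.list_cons.comp hn (primrec_pref.comp hag hk)))
      (Primrec.option_some.comp ((Primrec.const false).pair
        (Primrec₂.comp Primrec.nat_mul (Primrec.const 2) hq)))
  have H : Primrec fun x : (ℕ × List ℕ) × ℕ =>
      (validD cd x.1.2 x.2.unpair.2.unpair.1 x.2.unpair.1
          (Denumerable.ofNat (List ℕ) x.2.unpair.2.unpair.2.unpair.1) &&
        isHalt (qstep cd x.2.unpair.2.unpair.1
          (x.2.unpair.1 :: Denumerable.ofNat (List ℕ) x.2.unpair.2.unpair.2.unpair.1)) &&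
        validG cφ x.1.2 x.2.unpair.2.unpair.1 x.2.unpair.1
          (Denumerable.ofNat (List ℕ) x.2.unpair.2.unpair.2.unpair.2.unpair.1) &&
        (decide (x.2.unpair.2.unpair.2.unpair.2.unpair.2 <
            (Denumerable.ofNat (List ℕ) x.2.unpair.2.unpair.2.unpair.2.unpair.1).length) &&
          decide (qstep cφ x.2.unpair.2.unpair.1
            (x.2.unpair.1 ::
              pref (Denumerable.ofNat (List ℕ) x.2.unpair.2.unpair.2.unpair.2.unpair.1)
                x.2.unpair.2.unpair.2.unpair.2.unpair.2) = some (false, 2 * x.1.1)))) :=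
    Primrec₂.comp Primrec.and
      (Primrec₂.comp Primrec.and (Primrec₂.comp Primrec.and hc1 hc2) hc3)
      (Primrec₂.comp Primrec.and hc4a hc4b)
  exact (H.of_eq fun x => rfl).to₂

theorem computable_chkS (cφ cd : Code) : Computable₂ (chkS cφ cd) := by
  have hany : Primrec fun p : ℕ × List ℕ =>
      (List.range p.2.length).any fun t => condS cφ cd p.1 p.2 t :=
    primrec_range_any (Primrec.list_length.comp Primrec.snd) (primrec_condS cφ cd)
  have hc := Primrec.cond hany (Primrec.const (some 0)) (Primrec.const (none : Option ℕ))
  have H : Primrec fun p : ℕ × List ℕ => chkS cφ cd p.1 p.2 := hc.of_eq fun p => by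
    rcases h : (List.range p.2.length).any fun t => condS cφ cd p.1 p.2 t <;> simp [chkS, h]
  exact H.to₂.to_comp

end AntiCup
namespace AntiCup

open Nat.Partrec (Code)
open Nat.Partrec.Code

theorem primrec_lookupL (Lf : List (ℕ × ℕ)) : Primrec (lookupL Lf) := by
  induction Lf with
  | nil => exact (Primrec.const none).of_eq fun q => rfl
  | cons p t ih =>
    have h := Primrec.ite (PrimrecRel.comp Primrec.eq Primrec.id (Primrec.const p.1))
      (Primrec.const (some p.2)) ih
    exact h.of_eq fun q => rfl

theorem primrec_stepM (cφ : Code) (Lf : List (ℕ × ℕ)) :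
    Primrec fun x : (ℕ × List ℕ) × Option (ℕ ⊕ List ℕ) => stepM cφ Lf x.1.1 x.1.2 x.2 := by
  have hn : Primrec fun x : (ℕ × List ℕ) × Option (ℕ ⊕ List ℕ) => x.1.1 :=
    Primrec.fst.comp Primrec.fst
  have hbs : Primrec fun x : (ℕ × List ℕ) × Option (ℕ ⊕ List ℕ) => x.1.2 :=
    Primrec.snd.comp Primrec.fst
  -- the inner processing of a running state h
  have hinner : Primrec fun y : ((ℕ × List ℕ) × Option (ℕ ⊕ List ℕ)) × List ℕ =>
      (match qstep cφ y.1.1.2.length (y.1.1.1 :: y.2) with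
        | some (true, m) => some (Sum.inl m)
        | some (false, qi) =>
          if qi % 2 = 0 then
            match lookupL Lf (qi / 2) with
            | some v => some (Sum.inr (y.2 ++ [v]))
            | none => none
          else
            match y.1.1.2[qi / 2]? with
            | some b => some (Sum.inr (y.2 ++ [b]))
            | none => none
        | none => none : Option (ℕ ⊕ List ℕ)) := by
    have hyn : Primrec fun y : ((ℕ × List ℕ) × Option (ℕ ⊕ List ℕ)) × List ℕ => y.1.1.1 :=
      Primrec.fst.comp (Primrec.fst.comp Primrec.fst)
    have hybs : Primrec fun y : ((ℕ × List ℕ) × Option (ℕ ⊕ List ℕ)) × List ℕ => y.1.1.2 :=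
      Primrec.snd.comp (Primrec.fst.comp Primrec.fst)
    have hyh : Primrec fun y : ((ℕ × List ℕ) × Option (ℕ ⊕ List ℕ)) × List ℕ => y.2 :=
      Primrec.snd
    have hq : Primrec fun y : ((ℕ × List ℕ) × Option (ℕ ⊕ List ℕ)) × List ℕ =>
        qstep cφ y.1.1.2.length (y.1.1.1 :: y.2) :=
      (primrec_qstep cφ).comp (Primrec.list_length.comp hybs) (Primrec.list_cons.comp hyn hyh)
    -- process a query result pair (b, qi)
    have hproc : Primrec₂ fun (y : ((ℕ × List ℕ) × Option (ℕ ⊕ List ℕ)) × List ℕ)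
        (r : Bool × ℕ) =>
        (bif r.1 then some (Sum.inl r.2) else
          if r.2 % 2 = 0 then
            match lookupL Lf (r.2 / 2) with
            | some v => some (Sum.inr (y.2 ++ [v]))
            | none => none
          else
            match y.1.1.2[r.2 / 2]? with
            | some b => some (Sum.inr (y.2 ++ [b]))
            | none => none : Option (ℕ ⊕ List ℕ)) := by
      have hzb : Primrec fun z : (((ℕ × List ℕ) × Option (ℕ ⊕ List ℕ)) × List ℕ) × Bool × ℕ =>
          z.2.1 := Primrec.fst.comp Primrec.snd
      have hzq : Primrec fun z : (((ℕ × List ℕ) × Option (ℕ ⊕ List ℕ)) × List ℕ) × Bool × ℕ =>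
          z.2.2 := Primrec.snd.comp Primrec.snd
      have hzh : Primrec fun z : (((ℕ × List ℕ) × Option (ℕ ⊕ List ℕ)) × List ℕ) × Bool × ℕ =>
          z.1.2 := Primrec.snd.comp Primrec.fst
      have hzbs : Primrec fun z : (((ℕ × List ℕ) × Option (ℕ ⊕ List ℕ)) × List ℕ) × Bool × ℕ =>
          z.1.1.1.2 := Primrec.snd.comp (Primrec.fst.comp (Primrec.fst.comp Primrec.fst))
      have hdiv : Primrec fun z : (((ℕ × List ℕ) × Option (ℕ ⊕ List ℕ)) × List ℕ) × Bool × ℕ =>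
          z.2.2 / 2 := Primrec₂.comp Primrec.nat_div hzq (Primrec.const 2)
      have heven : Primrec fun z : (((ℕ × List ℕ) × Option (ℕ ⊕ List ℕ)) × List ℕ) × Bool × ℕ =>
          (match lookupL Lf (z.2.2 / 2) with
            | some v => some (Sum.inr (z.1.2 ++ [v]))
            | none => none : Option (ℕ ⊕ List ℕ)) := by
        have h1 := Primrec.option_casesOn ((primrec_lookupL Lf).comp hdiv)
          (Primrec.const (none : Option (ℕ ⊕ List ℕ)))
          ((Primrec.option_some.comp (Primrec.sumInr.comp
            (Primrec.list_append.comp (hzh.comp Primrec.fst)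
              (Primrec.list_cons.comp Primrec.snd (Primrec.const []))))).to₂)
        exact h1.of_eq fun z => by rcases lookupL Lf (z.2.2 / 2) <;> rfl
      have hodd : Primrec fun z : (((ℕ × List ℕ) × Option (ℕ ⊕ List ℕ)) × List ℕ) × Bool × ℕ =>
          (match z.1.1.1.2[z.2.2 / 2]? with
            | some b => some (Sum.inr (z.1.2 ++ [b]))
            | none => none : Option (ℕ ⊕ List ℕ)) := by
        have h1 := Primrec.option_casesOn (Primrec.list_getElem?.comp hzbs hdiv)
          (Primrec.const (none : Option (ℕ ⊕ List ℕ)))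
          ((Primrec.option_some.comp (Primrec.sumInr.comp
            (Primrec.list_append.comp (hzh.comp Primrec.fst)
              (Primrec.list_cons.comp Primrec.snd (Primrec.const []))))).to₂)
        exact h1.of_eq fun z => by rcases z.1.1.1.2[z.2.2 / 2]? <;> rfl
      have hcnd : PrimrecPred fun z : (((ℕ × List ℕ) × Option (ℕ ⊕ List ℕ)) × List ℕ) ×
          Bool × ℕ => z.2.2 % 2 = 0 :=
        PrimrecRel.comp Primrec.eq (Primrec₂.comp Primrec.nat_mod hzq (Primrec.const 2))
          (Primrec.const 0)
      exact (Primrec.cond hzb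
        (Primrec.option_some.comp (Primrec.sumInl.comp hzq))
        (Primrec.ite hcnd heven hodd)).to₂
    have h2 := Primrec.option_casesOn hq (Primrec.const (none : Option (ℕ ⊕ List ℕ))) hproc
    exact h2.of_eq fun y => by
      rcases qstep cφ y.1.1.2.length (y.1.1.1 :: y.2) with _ | ⟨b, qi⟩
      · rfl
      · cases b <;> rfl
  have H := Primrec.option_casesOn
    (Primrec.snd : Primrec fun x : (ℕ × List ℕ) × Option (ℕ ⊕ List ℕ) => x.2)
    (Primrec.const (none : Option (ℕ ⊕ List ℕ)))
    ((Primrec.sumCasesOn Primrec.snd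
      ((Primrec.option_some.comp (Primrec.sumInl.comp Primrec.snd)).to₂)
      ((hinner.comp ((Primrec.fst.comp Primrec.fst).pair Primrec.snd)).to₂)).to₂)
  exact H.of_eq fun x => by
    rcases hx : x.2 with _ | st
    · rfl
    · rcases st with m | h <;> rfl

theorem primrec_chkM (cφ : Code) (Lf : List (ℕ × ℕ)) :
    Primrec₂ fun (n : ℕ) (bs : List ℕ) => chkM cφ Lf n bs := by
  have hsim : Primrec fun p : ℕ × List ℕ => simM cφ Lf p.1 p.2 p.2.length := by
    have := Primrec.nat_rec' (Primrec.list_length.comp Primrec.snd)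
      (Primrec.const (some (Sum.inr []) : Option (ℕ ⊕ List ℕ)))
      (((primrec_stepM cφ Lf).comp (Primrec.fst.pair
        (Primrec.snd.comp Primrec.snd))).to₂)
    exact this.of_eq fun p => rfl
  have H := Primrec.option_casesOn hsim (Primrec.const (none : Option ℕ))
    ((Primrec.sumCasesOn Primrec.snd ((Primrec.option_some.comp Primrec.snd).to₂)
      ((Primrec.const (none : Option ℕ)).to₂)).to₂)
  have H2 : Primrec fun p : ℕ × List ℕ => chkM cφ Lf p.1 p.2 := H.of_eq fun p => by
    unfold chkM
    rcases simM cφ Lf p.1 p.2 p.2.length with _ | st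
    · rfl
    · rcases st with m | h <;> rfl
  exact H2.to₂

end AntiCup

theorem anti_cupping (α β f : ℕ → ℕ) (A : Set ℕ)
    (hA : ImmuneIn (totalJoin α (totalJoin β f)) A)
    (g : ℕ →. ℕ) (hdom : REIn α g.Dom)
    (hle : SubTuringLE g (PJoin (restrictTo (f : ℕ →. ℕ) A) (β : ℕ →. ℕ))) :
    SubTuringLE g (β : ℕ →. ℕ) := by
  classical
  obtain ⟨Φ, hΦ, hΦc⟩ := hle
  obtain ⟨Φd, hΦd, hds⟩ := hdom
  obtain ⟨cφ, hcφ⟩ := Nat.Partrec.Code.exists_code.mp (AntiCup.liftP_partrec hΦ)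
  obtain ⟨cd, hcd⟩ := Nat.Partrec.Code.exists_code.mp (AntiCup.liftP_partrec hΦd)
  have hΦc' : ∀ n m, m ∈ g n → HaltsTo Φ (AntiCup.Oor f A β) n m := hΦc
  -- the set of `f↾A`-queries is c.e. in the big oracle
  have hRE : REIn (totalJoin α (totalJoin β f)) (AntiCup.Sset Φ g f β) := by
    refine ⟨AntiCup.simpleMachine (AntiCup.chkS cφ cd),
      AntiCup.simpleMachine_partrec (AntiCup.computable_chkS cφ cd), fun q => ?_⟩
    constructor
    · intro hq
      obtain ⟨L, t, htL, hcond⟩ := AntiCup.condS_complete hcφ hcd hds hq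
      have hchk : AntiCup.chkS cφ cd q
          (List.map (AntiCup.bigX α β f) (List.range L)) = some 0 := by
        unfold AntiCup.chkS
        rw [if_pos]
        · exact List.any_eq_true.mpr ⟨t, by
            simp only [List.length_map, List.length_range]
            exact ⟨List.mem_range.mpr htL, hcond⟩⟩
      exact AntiCup.simpleMachine_complete (X := AntiCup.bigX α β f) hchk
    · rintro ⟨m, hm⟩
      obtain ⟨L, hsome, -⟩ :=
        AntiCup.simpleMachine_sound (X := AntiCup.bigX α β f) hm
      unfold AntiCup.chkS at hsome
      by_cases hany : (List.range (List.map (AntiCup.bigX α β f) (List.range L)).length).any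
          fun t => AntiCup.condS cφ cd q (List.map (AntiCup.bigX α β f) (List.range L)) t
      · obtain ⟨t, -, hcond⟩ := List.any_eq_true.mp hany
        exact AntiCup.condS_sound hcφ hcd hds hcond
      · rw [if_neg hany] at hsome
        exact absurd hsome (by simp)
  have hfin : (AntiCup.Sset Φ g f β).Finite :=
    hA _ hRE (AntiCup.Sset_subset_A hΦc')
  set Lf := hfin.toFinset.toList.map (fun a => (a, f a)) with hLfdef
  have hlk : ∀ i v, AntiCup.lookupL Lf i = some v → i ∈ A ∧ v = f i := by
    intro i v h
    rw [hLfdef, AntiCup.lookupL_map] at h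
    by_cases hi : i ∈ hfin.toFinset.toList
    · rw [if_pos hi] at h
      have hiS : i ∈ AntiCup.Sset Φ g f β := by
        rw [← Set.Finite.mem_toFinset hfin, ← Finset.mem_toList]
        exact hi
      exact ⟨AntiCup.Sset_subset_A hΦc' hiS, (Option.some_inj.mp h).symm⟩
    · rw [if_neg hi] at h
      exact absurd h (by simp)
  have hlk2 : ∀ i, i ∈ AntiCup.Sset Φ g f β → AntiCup.lookupL Lf i = some (f i) := by
    intro i hi
    rw [hLfdef, AntiCup.lookupL_map, if_pos]
    rw [Finset.mem_toList, Set.Finite.mem_toFinset hfin]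
    exact hi
  refine ⟨AntiCup.simpleMachine (AntiCup.chkM cφ Lf),
    AntiCup.simpleMachine_partrec (AntiCup.primrec_chkM cφ Lf).to_comp, fun n m hm => ?_⟩
  obtain ⟨as0, hv0, hm0⟩ := hΦc' n m hm
  have hLf2 : ∀ j, j < as0.length → ∀ qi, (false, qi) ∈ Φ (n :: as0.take j) → qi % 2 = 0 →
      AntiCup.lookupL Lf (qi / 2) = some (f (qi / 2)) := by
    intro j hj qi hqi hpar
    apply hlk2
    refine ⟨n, as0, j, (PFun.mem_dom g n).mpr ⟨m, hm⟩,
      AntiCup.validHist_mono AntiCup.Oor_le_Gor hv0, hj, ?_⟩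
    have h2 : qi = 2 * (qi / 2) := by omega
    rwa [← h2]
  obtain ⟨K, hK⟩ := AntiCup.chkM_complete hcφ hv0 hm0 hLf2
  obtain ⟨m', hHalt⟩ := AntiCup.simpleMachine_complete (X := β) hK
  obtain ⟨L', hsome', -⟩ := AntiCup.simpleMachine_sound (X := β) hHalt
  have hH : HaltsTo Φ (AntiCup.Oor f A β) n m' := AntiCup.chkM_sound hcφ hlk hsome'
  have hmm : m' = m := AntiCup.haltsTo_unique hH (hΦc' n m hm)
  rwa [hmm] at hHalt
end
end

section
/- Every nonzero subTuring degree bounds a quasiminimal subTuring degree: for every partial function f with no partial computable extension, there exists a set A ⊆ ℕ such that f↾A ≤subT f, f↾A has no partial computable extension, and every total function g with g ≤subT f↾A is computable. -/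
open Classical

noncomputable section

namespace BQM

open Nat.Partrec (Code)
open Nat.Partrec.Code Encodable Denumerable

/-- The `c`-th partial computable functional `List ℕ →. Bool × ℕ`. -/
def Phic (c : Code) : List ℕ →. Bool × ℕ := fun l =>
  (eval c (encode l)).bind fun x => (decode (α := Bool × ℕ) x : Option (Bool × ℕ))

theorem partrec_Phic (c : Code) : Partrec (Phic c) := by
  have h1 : Partrec (eval c) := Partrec.nat_iff.2 ((exists_code (f := eval c)).2 ⟨c, rfl⟩)
  have h2 : Partrec fun l : List ℕ => eval c (encode l) :=
    h1.comp Computable.encode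
  exact h2.bind ((Computable.decode.comp Computable.snd).ofOption)

theorem exists_Phic {Φ : List ℕ →. Bool × ℕ} (h : Partrec Φ) : ∃ c, Phic c = Φ := by
  obtain ⟨c, hc⟩ := exists_code.1 h
  refine ⟨c, funext fun l => ?_⟩
  ext m
  simp only [Phic, hc, Part.mem_bind_iff, Part.mem_ofOption]
  constructor
  · rintro ⟨x, hx, hm⟩
    simp only [Part.mem_bind_iff, Part.mem_coe, Part.mem_map_iff] at hx
    obtain ⟨a, ha, y, hy, rfl⟩ := hx
    simp only [Option.mem_def, Encodable.encodek] at ha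
    have : l = a := by injection ha
    subst this
    rw [Encodable.encodek] at hm
    have : y = m := by injection hm
    subst this
    exact hy
  · intro hm
    refine ⟨encode m, ?_, by simp [Encodable.encodek]⟩
    simp only [Part.mem_bind_iff, Part.mem_coe, Part.mem_map_iff]
    exact ⟨l, by simp [Encodable.encodek], m, hm, rfl⟩

end BQM

namespace BQM
open Nat.Partrec (Code)
open Nat.Partrec.Code Encodable Denumerable

section Determinism

variable {Φ : List ℕ →. Bool × ℕ} {f : ℕ →. ℕ} {n : ℕ}

theorem validHist_restrict_mono {A : Set ℕ} {as : List ℕ}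
    (h : ValidHist Φ (restrictTo f A) n as) : ValidHist Φ f n as := by
  intro k hk
  obtain ⟨q, hq, ha⟩ := h k hk
  refine ⟨q, hq, ?_⟩
  unfold restrictTo at ha
  split at ha
  · exact ha
  · exact absurd ha (Part.notMem_none _)

theorem validHist_take_eq {as₁ as₂ : List ℕ}
    (h₁ : ValidHist Φ f n as₁) (h₂ : ValidHist Φ f n as₂) :
    ∀ k, k ≤ as₁.length → k ≤ as₂.length → as₁.take k = as₂.take k := by
  intro k
  induction k with
  | zero => simp
  | succ k ih =>
    intro hk1 hk2
    have hk1' : k < as₁.length := hk1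
    have hk2' : k < as₂.length := hk2
    have htk : as₁.take k = as₂.take k := ih hk1'.le hk2'.le
    obtain ⟨q₁, hq₁, ha₁⟩ := h₁ k hk1'
    obtain ⟨q₂, hq₂, ha₂⟩ := h₂ k hk2'
    rw [htk] at hq₁
    have hq : q₁ = q₂ := by
      have := Part.mem_unique hq₁ hq₂
      injection this
    subst hq
    have ha : as₁[k] = as₂[k] := Part.mem_unique ha₁ ha₂
    rw [List.take_succ, List.take_succ, htk,
      List.getElem?_eq_getElem hk1', List.getElem?_eq_getElem hk2', ha]

theorem halt_unique {as₁ as₂ : List ℕ} {m₁ m₂ : ℕ}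
    (h₁ : ValidHist Φ f n as₁) (e₁ : (true, m₁) ∈ Φ (n :: as₁))
    (h₂ : ValidHist Φ f n as₂) (e₂ : (true, m₂) ∈ Φ (n :: as₂)) :
    as₁ = as₂ ∧ m₁ = m₂ := by
  have key : ∀ (bs₁ bs₂ : List ℕ) (l₁ : ℕ) (hv₁ : ValidHist Φ f n bs₁)
      (hv₂ : ValidHist Φ f n bs₂) (he₁ : (true, l₁) ∈ Φ (n :: bs₁))
      (hle : bs₁.length ≤ bs₂.length), bs₁ = bs₂ := by
    intro bs₁ bs₂ l₁ hv₁ hv₂ he₁ hle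
    have htk := validHist_take_eq hv₁ hv₂ bs₁.length le_rfl hle
    rw [List.take_length] at htk
    rcases eq_or_lt_of_le hle with heq | hlt
    · rw [htk, List.take_of_length_le heq.ge]
    · exfalso
      obtain ⟨q, hq, _⟩ := hv₂ bs₁.length hlt
      rw [← htk] at hq
      have := Part.mem_unique he₁ hq
      simp at this
  rcases le_total as₁.length as₂.length with hle | hle
  · have := key as₁ as₂ m₁ h₁ h₂ e₁ hle
    subst this
    exact ⟨rfl, by have := Part.mem_unique e₁ e₂; injection this⟩
  · have := key as₂ as₁ m₂ h₂ h₁ e₂ hle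
    subst this
    exact ⟨rfl, by have := Part.mem_unique e₁ e₂; injection this⟩

end Determinism

section Table

/-- Simple association-list lookup. -/
def tbl : List (ℕ × ℕ) → ℕ → Option ℕ
  | [], _ => none
  | (a, b) :: L, q => if q = a then some b else tbl L q

theorem tbl_cons (a b q : ℕ) (L : List (ℕ × ℕ)) :
    tbl ((a, b) :: L) q = if q = a then some b else tbl L q := rfl

theorem computable_tbl (L : List (ℕ × ℕ)) : Computable (tbl L) := by
  induction L with
  | nil => exact Computable.const none
  | cons p L ih =>
    obtain ⟨a, b⟩ := p
    have hc : Computable fun q : ℕ => decide (q = a) :=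
      (PrimrecRel.comp Primrec.eq Primrec.id (Primrec.const a)).decide.to_comp
    have := Computable.cond hc (Computable.const (some b)) ih
    exact this.of_eq fun q => by
      by_cases h : q = a <;> simp [tbl_cons, h]

/-- The finite oracle table for `f` on the keys in `l`. -/
def mkTable (f : ℕ →. ℕ) (l : List ℕ) : List (ℕ × ℕ) :=
  l.filterMap fun q => if h : (f q).Dom then some (q, (f q).get h) else none

theorem mem_tbl_mkTable {f : ℕ →. ℕ} {l : List ℕ} {q a : ℕ} :
    a ∈ tbl (mkTable f l) q ↔ q ∈ l ∧ a ∈ f q := by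
  induction l with
  | nil => simp [mkTable, tbl]
  | cons x l ih =>
    by_cases hx : (f x).Dom
    · have hm : mkTable f (x :: l) = (x, (f x).get hx) :: mkTable f l := by
        simp [mkTable, List.filterMap_cons, hx]
      rw [hm]
      by_cases hq : q = x
      · subst hq
        rw [tbl_cons, if_pos rfl]
        simp only [Option.mem_def, Option.some.injEq, List.mem_cons]
        constructor
        · rintro rfl
          exact ⟨by simp, Part.get_mem hx⟩
        · rintro ⟨-, ha⟩
          exact (Part.mem_unique (Part.get_mem hx) ha)
      · rw [tbl_cons, if_neg hq, ih]
        simp only [List.mem_cons]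
        constructor
        · rintro ⟨h1, h2⟩
          exact ⟨Or.inr h1, h2⟩
        · rintro ⟨h1 | h1, h2⟩
          · exact absurd h1 hq
          · exact ⟨h1, h2⟩
    · have hm : mkTable f (x :: l) = mkTable f l := by
        simp [mkTable, List.filterMap_cons, hx]
      rw [hm, ih]
      simp only [List.mem_cons]
      constructor
      · rintro ⟨h1, h2⟩
        exact ⟨Or.inr h1, h2⟩
      · rintro ⟨h1 | h1, h2⟩
        · subst h1
          exact absurd (Part.dom_iff_mem.2 ⟨a, h2⟩) hx
        · exact ⟨h1, h2⟩

end Table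
end BQM

namespace BQM
open Nat.Partrec (Code)
open Nat.Partrec.Code Encodable Denumerable

/-- Witnesses against the `c`-th p.c. function extending `f`. -/
def Wset (f : ℕ →. ℕ) (c : Code) : Set ℕ := {n | ∃ m, m ∈ f n ∧ m ∉ eval c n}

theorem partrec_patch (c : Code) (L : List (ℕ × ℕ)) :
    Partrec fun n => Option.casesOn (tbl L n) (eval c n) Part.some := by
  have hs : Computable fun n : ℕ => (Option.casesOn (tbl L n) (Sum.inr n) Sum.inl : ℕ ⊕ ℕ) :=
    Computable.option_casesOn (computable_tbl L)
      (Computable.sumInr.comp Computable.id)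
      (Computable.sumInl.comp Computable.snd).to₂
  have hev : Partrec (eval c) := Partrec.nat_iff.2 ((exists_code (f := eval c)).2 ⟨c, rfl⟩)
  have := Partrec.sumCasesOn_right (f := fun n : ℕ => (Option.casesOn (tbl L n) (Sum.inr n) Sum.inl : ℕ ⊕ ℕ))
    (g := fun _ v => v) (h := fun _ n => eval c n) hs Computable.snd.to₂
    (hev.comp Computable.snd).to₂
  exact this.of_eq fun n => by
    cases h : tbl L n <;> simp [h]

theorem Wset_infinite {f : ℕ →. ℕ}
    (hf : ¬ ∃ p : ℕ →. ℕ, Partrec p ∧ ∀ n m, m ∈ f n → m ∈ p n) (c : Code) :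
    (Wset f c).Infinite := by
  by_contra hinf
  rw [Set.not_infinite] at hinf
  have hfin := hinf
  apply hf
  set L := mkTable f hfin.toFinset.toList with hL
  refine ⟨fun n => Option.casesOn (tbl L n) (eval c n) Part.some, partrec_patch c L, ?_⟩
  intro n m hm
  cases h : tbl L n with
  | none =>
    simp only [h]
    by_contra hne
    have hnW : n ∈ Wset f c := ⟨m, hm, hne⟩
    have : m ∈ tbl L n := mem_tbl_mkTable.2 ⟨by simpa using hnW, hm⟩
    rw [h] at this
    exact absurd this (by simp)
  | some v =>
    have hv : v ∈ f n := (mem_tbl_mkTable.1 (by rw [h]; rfl)).2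
    have : v = m := Part.mem_unique hv hm
    subst this
    simp [h]

/-- `q` is a bad query for functional `c` relative to the committed set `D`:
some halting `f`-valid computation queries `q` outside `D`. -/
def BadQ (f : ℕ →. ℕ) (c : Code) (D : Finset ℕ) (q : ℕ) : Prop :=
  q ∉ D ∧ ∃ n as m, ValidHist (Phic c) f n as ∧ (true, m) ∈ Phic c (n :: as) ∧
    ∃ k, ∃ hk : k < as.length, (false, q) ∈ Phic c (n :: as.take k)

def stepD (f : ℕ →. ℕ) (c : Code) (P : Finset ℕ × Finset ℕ) : Finset ℕ :=
  if h : ((Wset f c) \ ↑P.2).Nonempty then insert h.choose P.1 else P.1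

def stepF (f : ℕ →. ℕ) (c : Code) (P : Finset ℕ × Finset ℕ) : Finset ℕ :=
  if h : ∃ q, BadQ f c (stepD f c P) q then insert h.choose P.2 else P.2

def stages (f : ℕ →. ℕ) : ℕ → Finset ℕ × Finset ℕ
  | 0 => (∅, ∅)
  | s + 1 =>
    ((stepD f (ofNat Code s) (stages f s)), (stepF f (ofNat Code s) (stages f s)))

/-- The generic set `A`. -/
def Aset (f : ℕ →. ℕ) : Set ℕ := {n | ∃ s, n ∈ (stages f s).1}

theorem stages_D_mono (f : ℕ →. ℕ) {s t : ℕ} (h : s ≤ t) :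
    (stages f s).1 ⊆ (stages f t).1 := by
  induction t with
  | zero => simpa [Nat.le_zero.1 h]
  | succ t ih =>
    rcases Nat.lt_or_ge s (t+1) with h' | h'
    · refine (ih (Nat.lt_succ_iff.1 h')).trans ?_
      show (stages f t).1 ⊆ stepD f (ofNat Code t) (stages f t)
      unfold stepD
      split
      · exact Finset.subset_insert _ _
      · exact Finset.Subset.refl _
    · have : s = t + 1 := le_antisymm h h'
      subst this; exact Finset.Subset.refl _

theorem stages_F_mono (f : ℕ →. ℕ) {s t : ℕ} (h : s ≤ t) :
    (stages f s).2 ⊆ (stages f t).2 := by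
  induction t with
  | zero => simpa [Nat.le_zero.1 h]
  | succ t ih =>
    rcases Nat.lt_or_ge s (t+1) with h' | h'
    · refine (ih (Nat.lt_succ_iff.1 h')).trans ?_
      show (stages f t).2 ⊆ stepF f (ofNat Code t) (stages f t)
      unfold stepF
      split
      · exact Finset.subset_insert _ _
      · exact Finset.Subset.refl _
    · have : s = t + 1 := le_antisymm h h'
      subst this; exact Finset.Subset.refl _

theorem stages_disjoint (f : ℕ →. ℕ) (s : ℕ) :
    ∀ q ∈ (stages f s).2, q ∉ (stages f s).1 := by
  induction s with
  | zero => simp [stages]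
  | succ s ih =>
    intro q hq
    show q ∉ stepD f (ofNat Code s) (stages f s)
    have hq' : q ∈ stepF f (ofNat Code s) (stages f s) := hq
    unfold stepF at hq'
    split at hq'
    · rename_i h
      rcases Finset.mem_insert.1 hq' with rfl | hq''
      · exact h.choose_spec.1
      · -- q was already in F s; show q ∉ stepD
        intro hqD
        unfold stepD at hqD
        split at hqD
        · rename_i h2
          rcases Finset.mem_insert.1 hqD with rfl | hqD'
          · exact h2.choose_spec.2 (by simpa using hq'')
          · exact ih q hq'' hqD'
        · exact ih q hq'' hqD
    · intro hqD
      unfold stepD at hqD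
      split at hqD
      · rename_i h2
        rcases Finset.mem_insert.1 hqD with rfl | hqD'
        · exact h2.choose_spec.2 (by simpa using hq')
        · exact ih q hq' hqD'
      · exact ih q hq' hqD

theorem F_notin_A (f : ℕ →. ℕ) {q : ℕ} {s : ℕ} (hq : q ∈ (stages f s).2) :
    q ∉ Aset f := by
  rintro ⟨t, ht⟩
  have h1 : q ∈ (stages f (max s t)).2 := stages_F_mono f (le_max_left s t) hq
  have h2 : q ∈ (stages f (max s t)).1 := stages_D_mono f (le_max_right s t) ht
  exact stages_disjoint f (max s t) q h1 h2

end BQM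

namespace BQM
open Nat.Partrec (Code)
open Nat.Partrec.Code Encodable Denumerable

/-- One step of the simulation of `Phic c` with finite oracle table `f↾D'`. -/
def stepFn (f : ℕ →. ℕ) (c : Code) (D' : Finset ℕ) :
    ℕ × List ℕ →. ℕ ⊕ (ℕ × List ℕ) := fun p =>
  (Phic c (p.1 :: p.2)).bind fun bq =>
    (Part.ofOption (bif bq.1 then some (Sum.inl bq.2)
      else (tbl (mkTable f D'.toList) bq.2).map fun a => Sum.inr (p.1, p.2 ++ [a])))

theorem partrec_stepFn (f : ℕ →. ℕ) (c : Code) (D' : Finset ℕ) :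
    Partrec (stepFn f c D') := by
  have h1 : Partrec fun p : ℕ × List ℕ => Phic c (p.1 :: p.2) :=
    (partrec_Phic c).comp (Computable.list_cons.comp Computable.fst Computable.snd)
  have hO : Computable fun x : (ℕ × List ℕ) × (Bool × ℕ) =>
      (bif x.2.1 then some (Sum.inl x.2.2)
        else (tbl (mkTable f D'.toList) x.2.2).map fun a =>
          Sum.inr (x.1.1, x.1.2 ++ [a]) : Option (ℕ ⊕ (ℕ × List ℕ))) := by
    apply Computable.cond (Computable.fst.comp Computable.snd)
    · exact Computable.option_some.comp
        (Computable.sumInl.comp (Computable.snd.comp Computable.snd))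
    · have htbl : Computable fun x : (ℕ × List ℕ) × (Bool × ℕ) =>
          tbl (mkTable f D'.toList) x.2.2 :=
        (computable_tbl _).comp (Computable.snd.comp Computable.snd)
      have hg : Computable₂ fun (x : (ℕ × List ℕ) × (Bool × ℕ)) (a : ℕ) =>
          (Sum.inr (x.1.1, x.1.2 ++ [a]) : ℕ ⊕ (ℕ × List ℕ)) := by
        apply Computable.sumInr.comp
        exact Computable.pair
          (Computable.fst.comp (Computable.fst.comp Computable.fst))
          (Primrec.list_concat.to_comp.comp
            (Computable.snd.comp (Computable.fst.comp Computable.fst)) Computable.snd)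
      exact Computable.option_map htbl hg
  exact h1.bind (Computable.ofOption hO).to₂

theorem fix_complete {f : ℕ →. ℕ} {c : Code} {D' : Finset ℕ} {n m : ℕ} {as : List ℕ}
    (hv : ValidHist (Phic c) f n as) (hh : (true, m) ∈ Phic c (n :: as))
    (hq : ∀ (k) (hk : k < as.length) (q), (false, q) ∈ Phic c (n :: as.take k) → q ∈ D') :
    m ∈ (stepFn f c D').fix (n, []) := by
  suffices H : ∀ i j, j + i = as.length → m ∈ (stepFn f c D').fix (n, as.take j) by
    simpa using H as.length 0 (by omega)
  intro i
  induction i with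
  | zero =>
    intro j hj
    have hje : as.take j = as := List.take_of_length_le (by omega)
    rw [hje]
    apply PFun.mem_fix_iff.2
    left
    apply Part.mem_bind_iff.2
    refine ⟨(true, m), hh, ?_⟩
    simp
  | succ i ih =>
    intro j hj
    have hjlt : j < as.length := by omega
    obtain ⟨q, hq1, hq2⟩ := hv j hjlt
    have hqD : q ∈ D' := hq j hjlt q hq1
    have htbl : tbl (mkTable f D'.toList) q = some (as[j]'hjlt) :=
      mem_tbl_mkTable.2 ⟨(Finset.mem_toList).2 hqD, hq2⟩
    have hcat : as.take j ++ [as[j]'hjlt] = as.take (j+1) := by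
      rw [List.take_succ, List.getElem?_eq_getElem hjlt]
      rfl
    apply PFun.mem_fix_iff.2
    right
    refine ⟨(n, as.take (j+1)), ?_, ih (j+1) (by omega)⟩
    apply Part.mem_bind_iff.2
    refine ⟨(false, q), hq1, ?_⟩
    simp only [Bool.cond_false, htbl, Option.map_some, Part.mem_ofOption, Option.mem_def,
      Option.some.injEq, hcat]

end BQM

namespace BQM
open Nat.Partrec (Code)
open Nat.Partrec.Code Encodable Denumerable

def F0 : List ℕ → Option (Bool × ℕ) := fun l =>
  if l.length = 1 then (l.head?).map fun n => (false, n)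
  else if l.length = 2 then (l.tail.head?).map fun a => (true, a)
  else none

theorem computable_F0 : Computable F0 := by
  have h1 : PrimrecPred fun l : List ℕ => l.length = 1 :=
    PrimrecRel.comp Primrec.eq Primrec.list_length (Primrec.const 1)
  have h2 : PrimrecPred fun l : List ℕ => l.length = 2 :=
    PrimrecRel.comp Primrec.eq Primrec.list_length (Primrec.const 2)
  have hb1 : Primrec fun l : List ℕ => (l.head?).map fun n => ((false, n) : Bool × ℕ) :=
    Primrec.option_map Primrec.list_head?
      ((Primrec.const false).pair Primrec.snd).to₂
  have hb2 : Primrec fun l : List ℕ => (l.tail.head?).map fun a => ((true, a) : Bool × ℕ) :=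
    Primrec.option_map (Primrec.list_head?.comp Primrec.list_tail)
      ((Primrec.const true).pair Primrec.snd).to₂
  exact (Primrec.ite h1 hb1 (Primrec.ite h2 hb2 (Primrec.const none))).to_comp

theorem subLE_restrict (f : ℕ →. ℕ) (A : Set ℕ) :
    SubTuringLE (restrictTo f A) f := by
  refine ⟨fun l => (F0 l : Part (Bool × ℕ)), Computable.ofOption computable_F0, ?_⟩
  intro n m hm
  have hmf : m ∈ f n := by
    unfold restrictTo at hm
    split at hm
    · exact hm
    · exact absurd hm (Part.notMem_none _)
  refine ⟨[m], ?_, ?_⟩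
  · intro k hk
    have hk0 : k = 0 := by simpa using Nat.lt_one_iff.1 (by simpa using hk)
    subst hk0
    exact ⟨n, by simp [F0], by simpa using hmf⟩
  · simp [F0]

end BQM


open BQM Nat.Partrec Nat.Partrec.Code Encodable Denumerable

theorem bounds_quasiminimal (f : ℕ →. ℕ)
    (hf : ¬ ∃ p : ℕ →. ℕ, Partrec p ∧ ∀ n m, m ∈ f n → m ∈ p n) :
    ∃ A : Set ℕ,
      SubTuringLE (restrictTo f A) f ∧
      (¬ ∃ p : ℕ →. ℕ, Partrec p ∧ ∀ n m, m ∈ restrictTo f A n → m ∈ p n) ∧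
      ∀ g : ℕ → ℕ, SubTuringLE (g : ℕ →. ℕ) (restrictTo f A) → Computable g := by
  refine ⟨Aset f, subLE_restrict f _, ?_, ?_⟩
  · rintro ⟨p, pp, pext⟩
    obtain ⟨c, hc⟩ := exists_code.1 (Partrec.nat_iff.1 pp)
    have hne : ((Wset f c) \ ↑(stages f (encode c)).2).Nonempty :=
      ((Wset_infinite hf c).diff (Finset.finite_toSet _)).nonempty
    have hD : (stages f (encode c + 1)).1 = insert hne.choose (stages f (encode c)).1 := by
      show stepD f (ofNat Code (encode c)) (stages f (encode c)) = _
      rw [ofNat_encode]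
      unfold stepD
      rw [dif_pos hne]
    obtain ⟨m, hmf, hmp⟩ := hne.choose_spec.1
    have hA : hne.choose ∈ Aset f :=
      ⟨encode c + 1, by rw [hD]; exact Finset.mem_insert_self _ _⟩
    have hmr : m ∈ restrictTo f (Aset f) hne.choose := by
      unfold restrictTo
      rw [if_pos hA]
      exact hmf
    exact hmp (hc ▸ pext _ m hmr)
  · rintro g ⟨Φ, pΦ, hred⟩
    obtain ⟨c, hΦc⟩ := exists_Phic pΦ
    subst hΦc
    set P := stages f (encode c) with hP
    set D' := stepD f c P with hD'
    by_cases hb : ∃ q, BadQ f c D' q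
    · exfalso
      have hFq : hb.choose ∈ (stages f (encode c + 1)).2 := by
        show hb.choose ∈ stepF f (ofNat Code (encode c)) P
        rw [ofNat_encode]
        unfold stepF
        rw [← hD', dif_pos hb]
        exact Finset.mem_insert_self _ _
      obtain ⟨hqD, n₀, as₀, m₀, hv₀, hh₀, k, hk, hqk⟩ := hb.choose_spec
      have hnA : hb.choose ∉ Aset f := F_notin_A f hFq
      obtain ⟨as', hv', hh'⟩ := hred n₀ (g n₀) (Part.mem_some _)
      have hvf' : ValidHist (Phic c) f n₀ as' := validHist_restrict_mono hv'
      have heq : as₀ = as' := (halt_unique hv₀ hh₀ hvf' hh').1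
      subst heq
      obtain ⟨q', hq'1, hq'2⟩ := hv' k hk
      have hq'eq : q' = hb.choose := by
        have := Part.mem_unique hq'1 hqk
        injection this
      subst hq'eq
      unfold restrictTo at hq'2
      rw [if_neg hnA] at hq'2
      exact Part.notMem_none _ hq'2
    · have hqall : ∀ n as mm, ValidHist (Phic c) f n as → (true, mm) ∈ Phic c (n :: as) →
          ∀ (k) (hk : k < as.length) (q), (false, q) ∈ Phic c (n :: as.take k) → q ∈ D' := by
        intro n as mm hv hh k hk q hq
        by_contra hqD
        exact hb ⟨q, hqD, n, as, mm, hv, hh, k, hk, hq⟩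
      have hmem : ∀ n, g n ∈ (stepFn f c D').fix (n, []) := by
        intro n
        obtain ⟨as, hv, hh⟩ := hred n (g n) (Part.mem_some _)
        have hvf := validHist_restrict_mono hv
        exact fix_complete hvf hh (hqall n as (g n) hvf hh)
      have hpart : Partrec fun n : ℕ => (stepFn f c D').fix (n, []) :=
        (partrec_stepFn f c D').fix.comp (Computable.id.pair (Computable.const []))
      exact hpart.of_eq fun n => (Part.eq_some_iff.2 (hmem n))
end
end

section
/- Density of the subTuring degrees: if g <subT f, then there exists a partial function h with g <subT h <subT f. Moreover h can be chosen as (f↾A) ⊕ g for a suitable set A, and h is then a strong quasiminimal cover of g: every total function t with t ≤subT h satisfies t ≤subT g. -/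
open Classical

noncomputable section

namespace STAux

/-- pointwise submap order on oracles -/
def OLE (o o' : ℕ →. ℕ) : Prop := ∀ q a, a ∈ o q → a ∈ o' q

theorem validHist_mono {Φ : List ℕ →. Bool × ℕ} {o o' : ℕ →. ℕ} {n : ℕ} {as : List ℕ}
    (h : OLE o o') (hv : ValidHist Φ o n as) : ValidHist Φ o' n as := fun k hk =>
  let ⟨q, hq, ha⟩ := hv k hk; ⟨q, hq, h _ _ ha⟩

theorem haltsTo_mono {Φ : List ℕ →. Bool × ℕ} {o o' : ℕ →. ℕ} {n m : ℕ}
    (h : OLE o o') : HaltsTo Φ o n m → HaltsTo Φ o' n m := fun ⟨as, hv, hm⟩ =>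
  ⟨as, validHist_mono h hv, hm⟩

theorem haltsTo_congr {Φ Φ' : List ℕ →. Bool × ℕ} (h : ∀ l, Φ l = Φ' l)
    {o : ℕ →. ℕ} {n m : ℕ} : HaltsTo Φ o n m → HaltsTo Φ' o n m := fun ⟨as, hv, hm⟩ =>
  ⟨as, fun k hk => by rw [← h]; exact hv k hk, by rw [← h]; exact hm⟩

theorem take_eq_of_valid {Φ : List ℕ →. Bool × ℕ} {o : ℕ →. ℕ} {n : ℕ} {as as' : List ℕ}
    (hv : ValidHist Φ o n as) (hv' : ValidHist Φ o n as') :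
    ∀ k, k ≤ as.length → k ≤ as'.length → as.take k = as'.take k := by
  intro k
  induction k with
  | zero => simp
  | succ k ih =>
    intro h1 h2
    have hk1 : k < as.length := h1
    have hk2 : k < as'.length := h2
    have e := ih (le_of_lt hk1) (le_of_lt hk2)
    obtain ⟨q, hq, ha⟩ := hv k hk1
    obtain ⟨q', hq', ha'⟩ := hv' k hk2
    rw [← e] at hq'
    have hqq : q = q' := by
      have := Part.mem_unique hq hq'
      simpa using this
    subst hqq
    have hval : as[k] = as'[k] := Part.mem_unique ha ha'
    rw [List.take_succ, List.take_succ, e, List.getElem?_eq_getElem hk1,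
      List.getElem?_eq_getElem hk2, hval]

theorem halt_unique {Φ : List ℕ →. Bool × ℕ} {o : ℕ →. ℕ} {n : ℕ} {as as' : List ℕ} {m m' : ℕ}
    (hv : ValidHist Φ o n as) (hm : (true, m) ∈ Φ (n :: as))
    (hv' : ValidHist Φ o n as') (hm' : (true, m') ∈ Φ (n :: as')) : as = as' ∧ m = m' := by
  have hlen : as.length = as'.length := by
    by_contra hne
    rcases Nat.lt_or_ge as.length as'.length with h | h
    · have e := take_eq_of_valid hv hv' as.length le_rfl (le_of_lt h)
      rw [List.take_length] at e
      obtain ⟨q, hq, _⟩ := hv' as.length h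
      rw [← e] at hq
      have := Part.mem_unique hm hq
      simp at this
    · rcases Nat.lt_or_ge as'.length as.length with h' | h'
      · have e := take_eq_of_valid hv hv' as'.length (le_of_lt h') le_rfl
        rw [List.take_length] at e
        obtain ⟨q, hq, _⟩ := hv as'.length h'
        rw [e] at hq
        have := Part.mem_unique hm' hq
        simp at this
      · omega
  have e : as = as' := by
    have := take_eq_of_valid hv hv' as.length le_rfl (le_of_eq hlen)
    rwa [List.take_length, hlen, List.take_length] at this
  subst e
  exact ⟨rfl, by simpa using Part.mem_unique hm hm'⟩


theorem pjoin_even {u g : ℕ →. ℕ} (p : ℕ) : PJoin u g (2 * p) = u p := by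
  simp [PJoin, Nat.mul_div_cancel_left _ (by norm_num : 0 < 2)]

theorem pjoin_odd {u g : ℕ →. ℕ} (p : ℕ) : PJoin u g (2 * p + 1) = g p := by
  have h1 : (2 * p + 1) % 2 = 1 := by omega
  have h2 : (2 * p + 1) / 2 = p := by omega
  simp [PJoin, h1, h2]

theorem mem_restrictTo {f : ℕ →. ℕ} {A : Set ℕ} {p a : ℕ} :
    a ∈ restrictTo f A p ↔ p ∈ A ∧ a ∈ f p := by
  unfold restrictTo
  split
  · simp_all
  · simp_all

open Nat.Partrec (Code)
open Nat.Partrec.Code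

/-- universal machine -/
def ΦC (c : Code) : List ℕ →. Bool × ℕ := fun l =>
  (c.eval (Encodable.encode l)).bind fun k => Part.ofOption (Encodable.decode (α := Bool × ℕ) k)

theorem partrec_ΦC (c : Code) : Partrec (ΦC c) :=
  Partrec.bind (eval_part.comp (Computable.const c) Computable.encode)
    ((Computable.decode.comp Computable.snd).ofOption.to₂)

theorem exists_code_ΦC {Φ : List ℕ →. Bool × ℕ} (h : Partrec Φ) : ∃ c : Code, ∀ l, ΦC c l = Φ l := by
  obtain ⟨c, hc⟩ := exists_code.1 h
  refine ⟨c, fun l => ?_⟩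
  unfold ΦC
  rw [hc]
  apply Part.ext
  intro x
  simp [Encodable.encodek]
  constructor
  · rintro (⟨b, hb, rfl⟩ | ⟨b, hb, rfl⟩) <;> exact hb
  · intro hx
    rcases x with ⟨b, m⟩
    cases b
    · exact Or.inl ⟨m, hx, rfl⟩
    · exact Or.inr ⟨m, hx, rfl⟩


theorem exists_table (f : ℕ →. ℕ) (P : Finset ℕ) :
    ∃ τ : ℕ → Option ℕ, Computable τ ∧ (∀ p ∈ P, τ p = (f p).toOption) ∧ ∀ p ∉ P, τ p = none := by
  classical
  induction P using Finset.induction_on with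
  | empty => exact ⟨fun _ => none, Computable.const none, by simp, by simp⟩
  | @insert a P ha ih =>
    obtain ⟨τ, hc, h1, h2⟩ := ih
    refine ⟨fun x => if x = a then (f a).toOption else τ x, ?_, ?_, ?_⟩
    · have : Computable fun x : ℕ => bif x == a then (f a).toOption else τ x :=
        Computable.cond (Primrec.beq.comp Primrec.id (Primrec.const a)).to_comp
          (Computable.const _) hc
      exact this.of_eq fun x => by by_cases hx : x = a <;> simp [Bool.cond_eq_ite, beq_iff_eq, hx]
    · intro p hp
      by_cases hpa : p = a
      · subst hpa; simp
      · simp [hpa, h1 p ((Finset.mem_insert.1 hp).resolve_left hpa)]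
    · intro p hp
      have h1' : p ≠ a := fun h => hp (h ▸ Finset.mem_insert_self a P)
      have h2' : p ∉ P := fun h => hp (Finset.mem_insert_of_mem h)
      simp [h1', h2 p h2']

/-- machine for `g ≤ f↾A ⊕ g` -/
def joinRight : List ℕ →. Bool × ℕ := fun l =>
  Part.ofOption
    (bif l.length == 1 then some (false, 2 * l.headI + 1)
     else bif l.length == 2 then some (true, l.tail.headI) else none)

theorem partrec_joinRight : Partrec joinRight := by
  apply Computable.ofOption
  apply Computable.cond
  · exact (Primrec.beq.comp Primrec.list_length (Primrec.const 1)).to_comp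
  · exact (Primrec.option_some.comp ((Primrec.const false).pair
      (Primrec.succ.comp (Primrec.nat_mul.comp (Primrec.const 2) Primrec.list_headI)))).to_comp
  · apply Computable.cond
    · exact (Primrec.beq.comp Primrec.list_length (Primrec.const 2)).to_comp
    · exact (Primrec.option_some.comp ((Primrec.const true).pair
        (Primrec.list_headI.comp Primrec.list_tail))).to_comp
    · exact Computable.const none

theorem joinRight_halts {u g : ℕ →. ℕ} {n m : ℕ} (hm : m ∈ g n) :
    HaltsTo joinRight (PJoin u g) n m := by
  refine ⟨[m], ?_, ?_⟩
  · intro k hk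
    have hk0 : k = 0 := by simpa using hk
    subst hk0
    refine ⟨2 * n + 1, ?_, ?_⟩
    · show (false, 2 * n + 1) ∈ joinRight [n]
      simp [joinRight]
    · simpa [pjoin_odd] using hm
  · show (true, m) ∈ joinRight [n, m]
    simp [joinRight]

/-- machine for `f↾A ⊕ g ≤ f` given a machine for `g ≤ f` -/
def evenOdd (Φ : List ℕ →. Bool × ℕ) : List ℕ →. Bool × ℕ := fun l =>
  bif l.length == 0 then Part.none
  else bif l.headI % 2 == 1 then Φ (l.headI / 2 :: l.tail)
  else Part.ofOption
    (bif l.length == 1 then some (false, l.headI / 2)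
     else bif l.length == 2 then some (true, l.tail.headI) else none)

theorem partrec_evenOdd {Φ} (hΦ : Partrec Φ) : Partrec (evenOdd Φ) := by
  apply Partrec.cond
  · exact (Primrec.beq.comp Primrec.list_length (Primrec.const 0)).to_comp
  · exact Partrec.none
  · apply Partrec.cond
    · exact (Primrec.beq.comp (Primrec.nat_mod.comp Primrec.list_headI (Primrec.const 2))
        (Primrec.const 1)).to_comp
    · exact hΦ.comp ((Primrec.list_cons.comp
        (Primrec.nat_div.comp Primrec.list_headI (Primrec.const 2)) Primrec.list_tail).to_comp)
    · apply Computable.ofOption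
      apply Computable.cond
      · exact (Primrec.beq.comp Primrec.list_length (Primrec.const 1)).to_comp
      · exact (Primrec.option_some.comp ((Primrec.const false).pair
          (Primrec.nat_div.comp Primrec.list_headI (Primrec.const 2)))).to_comp
      · apply Computable.cond
        · exact (Primrec.beq.comp Primrec.list_length (Primrec.const 2)).to_comp
        · exact (Primrec.option_some.comp ((Primrec.const true).pair
            (Primrec.list_headI.comp Primrec.list_tail))).to_comp
        · exact Computable.const none

theorem evenOdd_halts_even {Φ} {o : ℕ →. ℕ} {k m : ℕ} (hk : k % 2 = 0) (hm : m ∈ o (k / 2)) :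
    HaltsTo (evenOdd Φ) o k m := by
  refine ⟨[m], ?_, ?_⟩
  · intro j hj
    have hj0 : j = 0 := by simpa using hj
    subst hj0
    refine ⟨k / 2, ?_, by simpa using hm⟩
    show (false, k / 2) ∈ evenOdd Φ [k]
    simp [evenOdd, hk]
  · show (true, m) ∈ evenOdd Φ [k, m]
    simp [evenOdd, hk]

theorem evenOdd_halts_odd {Φ} {o : ℕ →. ℕ} {k m : ℕ} (hk : k % 2 = 1)
    (hh : HaltsTo Φ o (k / 2) m) : HaltsTo (evenOdd Φ) o k m := by
  obtain ⟨as, hv, hm⟩ := hh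
  refine ⟨as, fun j hj => ?_, ?_⟩
  · obtain ⟨q, hq, ha⟩ := hv j hj
    exact ⟨q, by simpa [evenOdd, hk] using hq, ha⟩
  · simpa [evenOdd, hk] using hm

/-- input-patching machine -/
def patch (τ : ℕ → Option ℕ) (r : ℕ → ℕ) (Φ : List ℕ →. Bool × ℕ) : List ℕ →. Bool × ℕ :=
  fun l =>
  bif l.length == 0 then Part.none
  else bif (τ l.headI).isSome then Part.some (true, (τ l.headI).getD 0)
  else Φ (r l.headI :: l.tail)

theorem partrec_patch {τ : ℕ → Option ℕ} {r : ℕ → ℕ} {Φ} (hτ : Computable τ)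
    (hr : Computable r) (hΦ : Partrec Φ) : Partrec (patch τ r Φ) := by
  apply Partrec.cond
  · exact (Primrec.beq.comp Primrec.list_length (Primrec.const 0)).to_comp
  · exact Partrec.none
  · apply Partrec.cond
    · exact (Primrec.option_isSome.to_comp.comp (hτ.comp Primrec.list_headI.to_comp))
    · exact  ((Computable.const true).pair
        ((Primrec.option_getD.to_comp).comp (hτ.comp Primrec.list_headI.to_comp)
          (Computable.const 0))).partrec
    · exact hΦ.comp (Computable.list_cons.comp
        (hr.comp Primrec.list_headI.to_comp) Primrec.list_tail.to_comp)


theorem patch_halts_table {τ r Φ} {o : ℕ →. ℕ} {n v : ℕ} (h : τ n = some v) :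
    HaltsTo (patch τ r Φ) o n v :=
  ⟨[], by intro k hk; simp at hk, by simp [patch, h]⟩

theorem patch_halts_sim {τ r Φ} {o : ℕ →. ℕ} {n m : ℕ} (h : τ n = none)
    (hh : HaltsTo Φ o (r n) m) : HaltsTo (patch τ r Φ) o n m := by
  obtain ⟨as, hv, hm⟩ := hh
  refine ⟨as, fun k hk => ?_, by simpa [patch, h] using hm⟩
  obtain ⟨q, hq, ha⟩ := hv k hk
  exact ⟨q, by simpa [patch, h] using hq, ha⟩


def simStepB (τ : ℕ → Option ℕ) (s : ℕ × List ℕ × List ℕ × ℕ) (r : Bool × ℕ) :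
    Option ((Bool × ℕ) ⊕ (ℕ × List ℕ × List ℕ × ℕ)) :=
  bif r.1 then some (Sum.inl (true, r.2))
  else bif r.2 % 2 == 0 then
    (τ (r.2 / 2)).map fun a => Sum.inr (s.1, s.2.1, s.2.2.1 ++ [a], s.2.2.2)
  else bif (s.2.1[s.2.2.2]?).isSome then
    some (Sum.inr (s.1, s.2.1, s.2.2.1 ++ [(s.2.1[s.2.2.2]?).getD 0], s.2.2.2 + 1))
  else some (Sum.inl (false, r.2 / 2))

set_option maxHeartbeats 1000000 in
theorem computable_simStepB {τ : ℕ → Option ℕ} (hτ : Computable τ) :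
    Computable₂ (simStepB τ) := by
  have q1 : Primrec fun p : (ℕ × List ℕ × List ℕ × ℕ) × (Bool × ℕ) => p.1.1 :=
    Primrec.fst.comp Primrec.fst
  have q2 : Primrec fun p : (ℕ × List ℕ × List ℕ × ℕ) × (Bool × ℕ) => p.1.2.1 :=
    (Primrec.fst.comp Primrec.snd).comp Primrec.fst
  have q3 : Primrec fun p : (ℕ × List ℕ × List ℕ × ℕ) × (Bool × ℕ) => p.1.2.2.1 :=
    (Primrec.fst.comp (Primrec.snd.comp Primrec.snd)).comp Primrec.fst
  have q4 : Primrec fun p : (ℕ × List ℕ × List ℕ × ℕ) × (Bool × ℕ) => p.1.2.2.2 :=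
    (Primrec.snd.comp (Primrec.snd.comp Primrec.snd)).comp Primrec.fst
  have qb : Primrec fun p : (ℕ × List ℕ × List ℕ × ℕ) × (Bool × ℕ) => p.2.1 :=
    Primrec.fst.comp Primrec.snd
  have qn : Primrec fun p : (ℕ × List ℕ × List ℕ × ℕ) × (Bool × ℕ) => p.2.2 :=
    Primrec.snd.comp Primrec.snd
  have qget : Primrec fun p : (ℕ × List ℕ × List ℕ × ℕ) × (Bool × ℕ) => p.1.2.1[p.1.2.2.2]? :=
    Primrec.list_getElem?.comp q2 q4
  have hb1 : Computable fun p : (ℕ × List ℕ × List ℕ × ℕ) × (Bool × ℕ) =>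
      (some (Sum.inl (true, p.2.2)) : Option ((Bool × ℕ) ⊕ (ℕ × List ℕ × List ℕ × ℕ))) :=
    (Primrec.option_some.comp (Primrec.sumInl.comp ((Primrec.const true).pair qn))).to_comp
  have hb2 : Computable fun p : (ℕ × List ℕ × List ℕ × ℕ) × (Bool × ℕ) =>
      ((τ (p.2.2 / 2)).map fun a => Sum.inr (p.1.1, p.1.2.1, p.1.2.2.1 ++ [a], p.1.2.2.2) :
        Option ((Bool × ℕ) ⊕ (ℕ × List ℕ × List ℕ × ℕ))) := by
    apply Computable.option_map (hτ.comp (Primrec.nat_div.comp qn (Primrec.const 2)).to_comp)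
    exact (Primrec.sumInr.comp ((q1.comp Primrec.fst).pair
      ((q2.comp Primrec.fst).pair
        ((Primrec.list_concat.comp (q3.comp Primrec.fst) Primrec.snd).pair
          (q4.comp Primrec.fst))))).to_comp.to₂
  have hb3 : Computable fun p : (ℕ × List ℕ × List ℕ × ℕ) × (Bool × ℕ) =>
      (some (Sum.inr (p.1.1, p.1.2.1, p.1.2.2.1 ++ [(p.1.2.1[p.1.2.2.2]?).getD 0],
        p.1.2.2.2 + 1)) : Option ((Bool × ℕ) ⊕ (ℕ × List ℕ × List ℕ × ℕ))) :=
    (Primrec.option_some.comp (Primrec.sumInr.comp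
      (q1.pair (q2.pair ((Primrec.list_concat.comp q3
        (Primrec.option_getD.comp qget (Primrec.const 0))).pair
        (Primrec.succ.comp q4)))))).to_comp
  have hb4 : Computable fun p : (ℕ × List ℕ × List ℕ × ℕ) × (Bool × ℕ) =>
      (some (Sum.inl (false, p.2.2 / 2)) : Option ((Bool × ℕ) ⊕ (ℕ × List ℕ × List ℕ × ℕ))) :=
    (Primrec.option_some.comp (Primrec.sumInl.comp
      ((Primrec.const false).pair (Primrec.nat_div.comp qn (Primrec.const 2))))).to_comp
  exact (Computable.cond qb.to_comp hb1
    (Computable.cond (Primrec.beq.comp (Primrec.nat_mod.comp qn (Primrec.const 2))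
      (Primrec.const 0)).to_comp hb2
      (Computable.cond (Primrec.option_isSome.comp qget).to_comp hb3 hb4))).to₂


/-- one step of the mixed-oracle simulator: even queries answered by the finite
table `τ`, odd queries relayed to the real oracle. -/
def simStep (τ : ℕ → Option ℕ) (Φ : List ℕ →. Bool × ℕ) :
    ℕ × List ℕ × List ℕ × ℕ →. (Bool × ℕ) ⊕ (ℕ × List ℕ × List ℕ × ℕ) := fun s =>
  (Φ (s.1 :: s.2.2.1)).bind fun r => Part.ofOption (simStepB τ s r)

def simul (τ : ℕ → Option ℕ) (Φ : List ℕ →. Bool × ℕ) : List ℕ →. Bool × ℕ := fun l =>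
  bif l.length == 0 then Part.none
  else PFun.fix (simStep τ Φ) (l.headI, l.tail, [], 0)

theorem partrec_simStep {τ : ℕ → Option ℕ} {Φ} (hτ : Computable τ) (hΦ : Partrec Φ) :
    Partrec (simStep τ Φ) := by
  apply Partrec.bind
  · exact hΦ.comp (Primrec.list_cons.comp Primrec.fst
      (Primrec.fst.comp (Primrec.snd.comp Primrec.snd))).to_comp
  · exact Partrec.to₂ (Computable.ofOption (computable_simStepB hτ))

theorem partrec_simul {τ : ℕ → Option ℕ} {Φ} (hτ : Computable τ) (hΦ : Partrec Φ) :
    Partrec (simul τ Φ) := by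
  apply Partrec.cond
  · exact (Primrec.beq.comp Primrec.list_length (Primrec.const 0)).to_comp
  · exact Partrec.none
  · exact (Partrec.fix (partrec_simStep hτ hΦ)).comp
      (Primrec.list_headI.pair (Primrec.list_tail.pair
        ((Primrec.const ([] : List ℕ)).pair (Primrec.const 0)))).to_comp



theorem simStepB_halt {τ : ℕ → Option ℕ} {s : ℕ × List ℕ × List ℕ × ℕ} {m : ℕ} :
    simStepB τ s (true, m) = some (Sum.inl (true, m)) := rfl

theorem simStepB_even {τ : ℕ → Option ℕ} {s : ℕ × List ℕ × List ℕ × ℕ} {q a : ℕ}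
    (hq2 : q % 2 = 0) (hτa : τ (q/2) = some a) :
    simStepB τ s (false, q) = some (Sum.inr (s.1, s.2.1, s.2.2.1 ++ [a], s.2.2.2)) := by
  simp [simStepB, hq2, hτa]

theorem simStepB_odd_cons {τ : ℕ → Option ℕ} {s : ℕ × List ℕ × List ℕ × ℕ} {q a : ℕ}
    (hodd : q % 2 = 1) (hget : s.2.1[s.2.2.2]? = some a) :
    simStepB τ s (false, q) =
      some (Sum.inr (s.1, s.2.1, s.2.2.1 ++ [a], s.2.2.2 + 1)) := by
  simp [simStepB, hodd, hget]

theorem simStepB_odd_stop {τ : ℕ → Option ℕ} {s : ℕ × List ℕ × List ℕ × ℕ} {q : ℕ}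
    (hodd : q % 2 = 1) (hget : s.2.1[s.2.2.2]? = none) :
    simStepB τ s (false, q) = some (Sum.inl (false, q / 2)) := by
  simp [simStepB, hodd, hget]

theorem mem_simStep {τ : ℕ → Option ℕ} {Φ : List ℕ →. Bool × ℕ}
    {s : ℕ × List ℕ × List ℕ × ℕ} {r : Bool × ℕ} {y}
    (hr : r ∈ Φ (s.1 :: s.2.2.1)) (hy : simStepB τ s r = some y) : y ∈ simStep τ Φ s :=
  Part.mem_bind_iff.2 ⟨r, hr, by simp [hy]⟩

set_option maxRecDepth 8000 in
theorem simul_halts {τ : ℕ → Option ℕ} {Φ : List ℕ →. Bool × ℕ} {u g : ℕ →. ℕ} {n : ℕ}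
    {as : List ℕ} {m : ℕ}
    (hv : ValidHist Φ (PJoin u g) n as) (hm : (true, m) ∈ Φ (n :: as))
    (hτ : ∀ (k : ℕ) (hk : k < as.length) (q : ℕ), (false, q) ∈ Φ (n :: as.take k) →
      q % 2 = 0 → τ (q / 2) = some (as[k]'hk)) :
    HaltsTo (simul τ Φ) g n m := by
  have main : ∀ d k, k ≤ as.length → as.length - k = d → ∃ bs : List ℕ,
      ∀ cs : List ℕ, ∀ i : ℕ, i ≤ cs.length → cs.length ≤ i + bs.length →
      (∀ j, i + j < cs.length → cs[i+j]? = bs[j]?) →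
      (cs.length = i + bs.length →
        (true, m) ∈ PFun.fix (simStep τ Φ) (n, cs, as.take k, i)) ∧
      (cs.length < i + bs.length → ∃ q' b,
        (false, q') ∈ PFun.fix (simStep τ Φ) (n, cs, as.take k, i)
        ∧ bs[cs.length - i]? = some b ∧ b ∈ g q') := by
    intro d
    induction d with
    | zero =>
      intro k hk hd
      have hkl : k = as.length := by omega
      subst hkl
      refine ⟨[], fun cs i h1 h2 hagree => ⟨fun hlen => ?_, fun hlt => ?_⟩⟩
      · rw [List.take_length]
        exact PFun.fix_stop (mem_simStep hm rfl)
      · exfalso; simp at hlt; omega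
    | succ d ih =>
      intro k hk hd
      have hklt : k < as.length := by omega
      obtain ⟨q, hq, ha⟩ := hv k hklt
      have htake : as.take (k+1) = as.take k ++ [as[k]'hklt] := by
        rw [List.take_succ, List.getElem?_eq_getElem hklt, Option.toList_some]
      obtain ⟨bs', IH⟩ := ih (k+1) (by omega) (by omega)
      by_cases hq2 : q % 2 = 0
      · -- even query, answered by the table
        have hτa := hτ k hklt q hq hq2
        refine ⟨bs', fun cs i h1 h2 hagree => ?_⟩
        have hstep : Sum.inr (n, cs, as.take (k+1), i) ∈
            simStep τ Φ (n, cs, as.take k, i) := by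
          apply mem_simStep hq
          rw [htake]
          exact simStepB_even hq2 hτa
        have heq := PFun.fix_fwd_eq hstep
        exact ⟨fun hlen => by rw [heq]; exact (IH cs i h1 h2 hagree).1 hlen,
          fun hlt => by rw [heq]; exact (IH cs i h1 h2 hagree).2 hlt⟩
      · -- odd query, relayed to the real oracle
        have hodd : q % 2 = 1 := by omega
        have hag : (as[k]'hklt) ∈ g (q / 2) := by
          have h2q : q = 2 * (q/2) + 1 := by omega
          rw [h2q, pjoin_odd] at ha
          exact ha
        refine ⟨(as[k]'hklt) :: bs', fun cs i h1 h2 hagree => ?_⟩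
        rcases Nat.eq_or_lt_of_le h1 with hlen0 | hlt0
        · -- real answers exhausted: output the next odd query
          have hget : cs[i]? = none := List.getElem?_eq_none (by omega)
          have hstep : Sum.inl ((false, q/2) : Bool × ℕ) ∈
              simStep τ Φ (n, cs, as.take k, i) := by
            apply mem_simStep hq
            exact simStepB_odd_stop hodd hget
          constructor
          · intro hlen; exfalso; simp at hlen; omega
          · intro _
            refine ⟨q/2, as[k]'hklt, PFun.fix_stop hstep, ?_, hag⟩
            have h0 : cs.length - i = 0 := by omega
            rw [h0]; simp
        · -- consume the next real answer
          have hget : cs[i]? = some (as[k]'hklt) := by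
            have h := hagree 0 (by omega)
            simpa using h
          have hstep : Sum.inr (n, cs, as.take (k+1), i+1) ∈
              simStep τ Φ (n, cs, as.take k, i) := by
            apply mem_simStep hq
            rw [htake]
            exact simStepB_odd_cons hodd hget
          have heq := PFun.fix_fwd_eq hstep
          have hagree' : ∀ j, (i+1) + j < cs.length → cs[(i+1)+j]? = bs'[j]? := by
            intro j hj
            have h := hagree (j+1) (by omega)
            have e : i + (j+1) = (i+1)+j := by omega
            rw [e] at h
            simpa using h
          have hIH := IH cs (i+1) (by omega) (by simp at h2 ⊢; omega) hagree'
          constructor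
          · intro hlen
            rw [heq]
            exact hIH.1 (by simp at hlen; omega)
          · intro hlt
            rw [heq]
            rcases Nat.lt_or_ge cs.length (i + 1 + bs'.length) with hlt' | hge'
            · obtain ⟨q', b, hmem, hsome, hb⟩ := hIH.2 hlt'
              refine ⟨q', b, hmem, ?_, hb⟩
              have hidx : cs.length - i = (cs.length - (i+1)) + 1 := by omega
              rw [hidx]
              simpa using hsome
            · exfalso; simp at hlt; omega
  obtain ⟨bs, H⟩ := main as.length 0 (Nat.zero_le _) (by omega)
  have hfix : ∀ cs : List ℕ, simul τ Φ (n :: cs) = PFun.fix (simStep τ Φ) (n, cs, [], 0) := by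
    intro cs; simp [simul]
  refine ⟨bs, ?_, ?_⟩
  · intro j hj
    have hag : ∀ j', 0 + j' < (bs.take j).length → (bs.take j)[0+j']? = bs[j']? := by
      intro j' hj'
      simp at hj'
      simp [List.getElem?_take, hj'.1]
    have h := (H (bs.take j) 0 (Nat.zero_le _)
      (by simp only [List.length_take]; omega) hag).2
      (by simp only [List.length_take]; omega)
    obtain ⟨q', b, hmem, hsome, hb⟩ := h
    refine ⟨q', ?_, ?_⟩
    · rw [hfix]; exact hmem
    · have hjl : (bs.take j).length - 0 = j := by simp only [List.length_take]; omega
      rw [hjl] at hsome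
      have hbj : bs[j]'hj = b := by
        rw [List.getElem?_eq_getElem hj] at hsome
        exact Option.some_injective _ hsome
      rw [hbj]; exact hb
  · have h := (H bs 0 (Nat.zero_le _) (by omega) (fun j hj => by simp)).1 (by omega)
    rw [hfix]; exact h


def oracS (f g : ℕ →. ℕ) (X : Set ℕ) : ℕ →. ℕ := PJoin (restrictTo f X) g

theorem oracS_even {f g : ℕ →. ℕ} {X : Set ℕ} {q : ℕ} (hq : q % 2 = 0) :
    oracS f g X q = restrictTo f X (q / 2) := by
  unfold oracS PJoin
  rw [if_pos hq]

theorem oracS_odd {f g : ℕ →. ℕ} {X : Set ℕ} {q : ℕ} (hq : ¬ q % 2 = 0) :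
    oracS f g X q = g (q / 2) := by
  unfold oracS PJoin
  rw [if_neg hq]

theorem oracS_mono {f g : ℕ →. ℕ} {A B : Set ℕ} (h : A ⊆ B) :
    OLE (oracS f g A) (oracS f g B) := by
  intro q a ha
  by_cases hq : q % 2 = 0
  · rw [oracS_even hq] at ha ⊢
    obtain ⟨h1, h2⟩ := mem_restrictTo.1 ha
    exact mem_restrictTo.2 ⟨h h1, h2⟩
  · rwa [oracS_odd hq] at ha ⊢

/-- If halting is robust under forbidding any one point outside `P`, then all even
queries of the (unique) halting history lie in `P`. -/
theorem evens_in_P {f g : ℕ →. ℕ} {Φ : List ℕ →. Bool × ℕ} {P N : Finset ℕ} {n : ℕ}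
    {as : List ℕ} {m : ℕ}
    (hv : ValidHist Φ (oracS f g (↑N : Set ℕ)ᶜ) n as)
    (hm : (true, m) ∈ Φ (n :: as))
    (hypP : ∀ p : ℕ, p ∉ P → p ∉ N →
      ∃ m', HaltsTo Φ (oracS f g (↑(insert p N) : Set ℕ)ᶜ) n m') :
    ∀ (k : ℕ) (hk : k < as.length) (q : ℕ), (false, q) ∈ Φ (n :: as.take k) → q % 2 = 0 →
      q / 2 ∈ P ∧ (as[k]'hk) ∈ f (q / 2) := by
  intro k hk q hq hq2
  obtain ⟨q0, hq0, ha⟩ := hv k hk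
  have hqq : q0 = q := by
    have := Part.mem_unique hq0 hq
    simpa using this
  rw [hqq] at ha
  rw [oracS_even hq2] at ha
  obtain ⟨hpN, haf⟩ := mem_restrictTo.1 ha
  have hpN' : q / 2 ∉ N := by simpa using hpN
  refine ⟨?_, haf⟩
  by_contra hpP
  obtain ⟨m', as', hv', hm'⟩ := hypP (q/2) hpP hpN'
  have hsub : ((↑(insert (q/2) N) : Set ℕ)ᶜ) ⊆ ((↑N : Set ℕ)ᶜ) :=
    Set.compl_subset_compl.2 (Finset.coe_subset.2 (Finset.subset_insert _ N))
  have hv'' := validHist_mono (oracS_mono (f := f) (g := g) hsub) hv'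
  obtain ⟨heq, _⟩ := halt_unique hv'' hm' hv hm
  subst heq
  obtain ⟨q1, hq1, ha1⟩ := hv' k hk
  have hq1q : q1 = q := by
    have := Part.mem_unique hq1 hq
    simpa using this
  rw [hq1q] at ha1
  rw [oracS_even hq2] at ha1
  obtain ⟨hmem, _⟩ := mem_restrictTo.1 ha1
  simp at hmem

theorem subTuring_of_R1fail {f g : ℕ →. ℕ} {Φ} (hΦ : Partrec Φ) (N : Finset ℕ)
    (h : ∀ n, n ∉ N → ∀ m, m ∈ f n → HaltsTo Φ g (2*n) m) : SubTuringLE f g := by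
  obtain ⟨τ, hτc, hτ1, hτ2⟩ := exists_table f N
  refine ⟨patch τ (fun x => 2*x) Φ,
    partrec_patch hτc (Primrec.nat_mul.comp (Primrec.const 2) Primrec.id).to_comp hΦ, ?_⟩
  intro n m hm
  by_cases hn : n ∈ N
  · have hτn : τ n = some m := by rw [hτ1 n hn]; exact Part.toOption_eq_some_iff.2 hm
    exact patch_halts_table hτn
  · exact patch_halts_sim (hτ2 n hn) (h n hn m hm)

theorem subTuring_of_R2fail {f g : ℕ →. ℕ} {Φ} (hΦ : Partrec Φ) (P N : Finset ℕ)
    (hdisj : Disjoint N P)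
    (h : ∀ N' : Finset ℕ, N ⊆ N' → Disjoint N' P →
      ∀ n m, m ∈ f n → HaltsTo Φ (oracS f g (↑N' : Set ℕ)ᶜ) n m) : SubTuringLE f g := by
  obtain ⟨τ, hτc, hτ1, hτ2⟩ := exists_table f P
  refine ⟨simul τ Φ, partrec_simul hτc hΦ, ?_⟩
  intro n m hm
  obtain ⟨as, hv, hmm⟩ := h N (subset_refl N) hdisj n m hm
  have hevens := evens_in_P hv hmm (fun p hpP hpN =>
    ⟨m, h (insert p N) (Finset.subset_insert p N)
      (Finset.disjoint_insert_left.2 ⟨hpP, hdisj⟩) n m hm⟩)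
  apply simul_halts (u := restrictTo f ((↑N : Set ℕ)ᶜ)) hv hmm
  intro k hk q hq hq2
  obtain ⟨hqP, hqf⟩ := hevens k hk q hq hq2
  rw [hτ1 _ hqP]
  exact Part.toOption_eq_some_iff.2 hqf

theorem subTuring_total_of_R3fail {f g : ℕ →. ℕ} {Φ} (hΦ : Partrec Φ) (P N : Finset ℕ)
    (hdisj : Disjoint N P)
    (h : ∀ N' : Finset ℕ, N ⊆ N' → Disjoint N' P →
      ∀ n, ∃ m, HaltsTo Φ (oracS f g (↑N' : Set ℕ)ᶜ) n m)
    (t : ℕ → ℕ) (ht : ∀ n, HaltsTo Φ (oracS f g (↑N : Set ℕ)ᶜ) n (t n)) :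
    SubTuringLE (t : ℕ →. ℕ) g := by
  obtain ⟨τ, hτc, hτ1, hτ2⟩ := exists_table f P
  refine ⟨simul τ Φ, partrec_simul hτc hΦ, ?_⟩
  intro n m hm
  have hmt : m = t n := by simpa using hm
  subst hmt
  obtain ⟨as, hv, hmm⟩ := ht n
  have hevens := evens_in_P hv hmm (fun p hpP hpN =>
    h (insert p N) (Finset.subset_insert p N)
      (Finset.disjoint_insert_left.2 ⟨hpP, hdisj⟩) n)
  apply simul_halts (u := restrictTo f ((↑N : Set ℕ)ᶜ)) hv hmm
  intro k hk q hq hq2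
  obtain ⟨hqP, hqf⟩ := hevens k hk q hq hq2
  rw [hτ1 _ hqP]
  exact Part.toOption_eq_some_iff.2 hqf


def ΦE (e : ℕ) : List ℕ →. Bool × ℕ := ΦC (Denumerable.ofNat Code e)

theorem partrec_ΦE (e : ℕ) : Partrec (ΦE e) := partrec_ΦC _

theorem ΦE_encode {Φ : List ℕ →. Bool × ℕ} (h : Partrec Φ) : ∃ e, ∀ l, ΦE e l = Φ l := by
  obtain ⟨c, hc⟩ := exists_code_ΦC h
  refine ⟨Encodable.encode c, fun l => ?_⟩
  unfold ΦE
  rw [Denumerable.ofNat_encode]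
  exact hc l

/-- one forcing step of the construction -/
def stepSel (f g : ℕ →. ℕ) (e i : ℕ) (PN : Finset ℕ × Finset ℕ) : Finset ℕ × Finset ℕ :=
  if i % 3 = 0 then
    if H : ∃ n, n ∉ PN.2 ∧ ∃ m, m ∈ f n ∧ ¬ HaltsTo (ΦE e) g (2*n) m
    then (insert H.choose PN.1, PN.2) else PN
  else if i % 3 = 1 then
    if H : ∃ N' : Finset ℕ, PN.2 ⊆ N' ∧ Disjoint N' PN.1 ∧ ∃ n m, m ∈ f n ∧
        ¬ HaltsTo (ΦE e) (oracS f g (↑N' : Set ℕ)ᶜ) n m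
    then (PN.1, H.choose) else PN
  else
    if H : ∃ N' : Finset ℕ, PN.2 ⊆ N' ∧ Disjoint N' PN.1 ∧ ∃ n, ∀ m,
        ¬ HaltsTo (ΦE e) (oracS f g (↑N' : Set ℕ)ᶜ) n m
    then (PN.1, H.choose) else PN

def stages (f g : ℕ →. ℕ) : ℕ → Finset ℕ × Finset ℕ
  | 0 => (∅, ∅)
  | s+1 => stepSel f g (Nat.unpair s).1 (Nat.unpair s).2 (stages f g s)

theorem stepSel_def0 (f g : ℕ →. ℕ) (e : ℕ) (PN : Finset ℕ × Finset ℕ) :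
    stepSel f g e 0 PN =
      if H : ∃ n, n ∉ PN.2 ∧ ∃ m, m ∈ f n ∧ ¬ HaltsTo (ΦE e) g (2*n) m
      then (insert H.choose PN.1, PN.2) else PN := rfl

theorem stepSel_def1 (f g : ℕ →. ℕ) (e : ℕ) (PN : Finset ℕ × Finset ℕ) :
    stepSel f g e 1 PN =
      if H : ∃ N' : Finset ℕ, PN.2 ⊆ N' ∧ Disjoint N' PN.1 ∧ ∃ n m, m ∈ f n ∧
          ¬ HaltsTo (ΦE e) (oracS f g (↑N' : Set ℕ)ᶜ) n m
      then (PN.1, H.choose) else PN := rfl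

theorem stepSel_def2 (f g : ℕ →. ℕ) (e : ℕ) (PN : Finset ℕ × Finset ℕ) :
    stepSel f g e 2 PN =
      if H : ∃ N' : Finset ℕ, PN.2 ⊆ N' ∧ Disjoint N' PN.1 ∧ ∃ n, ∀ m,
          ¬ HaltsTo (ΦE e) (oracS f g (↑N' : Set ℕ)ᶜ) n m
      then (PN.1, H.choose) else PN := rfl

theorem stepSel_inv (f g : ℕ →. ℕ) (e i : ℕ) (PN : Finset ℕ × Finset ℕ)
    (hd : Disjoint PN.2 PN.1) :
    PN.1 ⊆ (stepSel f g e i PN).1 ∧ PN.2 ⊆ (stepSel f g e i PN).2 ∧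
      Disjoint (stepSel f g e i PN).2 (stepSel f g e i PN).1 := by
  unfold stepSel
  split_ifs with h1 h2 h3 h4 h5
  · exact ⟨Finset.subset_insert _ _, subset_refl _,
      Finset.disjoint_insert_right.2 ⟨h2.choose_spec.1, hd⟩⟩
  · exact ⟨subset_refl _, subset_refl _, hd⟩
  · exact ⟨subset_refl _, h4.choose_spec.1, h4.choose_spec.2.1⟩
  · exact ⟨subset_refl _, subset_refl _, hd⟩
  · exact ⟨subset_refl _, h5.choose_spec.1, h5.choose_spec.2.1⟩
  · exact ⟨subset_refl _, subset_refl _, hd⟩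

theorem stages_disj (f g : ℕ →. ℕ) : ∀ s, Disjoint (stages f g s).2 (stages f g s).1 := by
  intro s
  induction s with
  | zero => simp [stages]
  | succ s ih => exact (stepSel_inv f g _ _ _ ih).2.2

theorem stages_mono (f g : ℕ →. ℕ) {s t : ℕ} (h : s ≤ t) :
    (stages f g s).1 ⊆ (stages f g t).1 ∧ (stages f g s).2 ⊆ (stages f g t).2 := by
  induction t with
  | zero =>
    have : s = 0 := Nat.le_zero.1 h
    subst this; exact ⟨subset_refl _, subset_refl _⟩
  | succ t ih =>
    rcases Nat.lt_or_ge s (t+1) with h' | h'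
    · have hs : s ≤ t := by omega
      obtain ⟨h1, h2⟩ := ih hs
      have hinv := stepSel_inv f g (Nat.unpair t).1 (Nat.unpair t).2 _ (stages_disj f g t)
      exact ⟨h1.trans hinv.1, h2.trans hinv.2.1⟩
    · have : s = t+1 := by omega
      subst this; exact ⟨subset_refl _, subset_refl _⟩

/-- the generic set A -/
def genA (f g : ℕ →. ℕ) : Set ℕ := {p | ∃ s, p ∈ (stages f g s).1}

theorem genA_disj (f g : ℕ →. ℕ) (s : ℕ) : ∀ p ∈ genA f g, p ∉ (stages f g s).2 := by
  rintro p ⟨t, hp⟩ hpN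
  rcases le_total t s with h | h
  · exact (stages_disj f g s).forall_ne_finset hpN ((stages_mono f g h).1 hp) rfl
  · exact (stages_disj f g t).forall_ne_finset ((stages_mono f g h).2 hpN) hp rfl

theorem genA_sub_compl (f g : ℕ →. ℕ) (s : ℕ) :
    genA f g ⊆ ((↑(stages f g s).2 : Set ℕ))ᶜ := fun p hp => by
  simpa using genA_disj f g s p hp

theorem stages_pair_succ (f g : ℕ →. ℕ) (e i : ℕ) :
    stages f g (Nat.pair e i + 1) = stepSel f g e i (stages f g (Nat.pair e i)) := by
  show stepSel f g (Nat.unpair (Nat.pair e i)).1 (Nat.unpair (Nat.pair e i)).2 _ = _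
  rw [Nat.unpair_pair]

theorem R1_sat (f g : ℕ →. ℕ) (hnle : ¬ SubTuringLE f g) (e : ℕ) :
    ∃ n m, n ∈ genA f g ∧ m ∈ f n ∧ ¬ HaltsTo (ΦE e) g (2*n) m := by
  by_cases H : ∃ n, n ∉ (stages f g (Nat.pair e 0)).2 ∧ ∃ m, m ∈ f n ∧
      ¬ HaltsTo (ΦE e) g (2*n) m
  · obtain ⟨hnN, m, hmf, hnh⟩ := H.choose_spec
    refine ⟨H.choose, m, ⟨Nat.pair e 0 + 1, ?_⟩, hmf, hnh⟩
    rw [stages_pair_succ, stepSel_def0, dif_pos H]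
    exact Finset.mem_insert_self _ _
  · push_neg at H
    exact absurd (subTuring_of_R1fail (partrec_ΦE e) (stages f g (Nat.pair e 0)).2
      (fun n hn m hm => H n hn m hm)) hnle

theorem R2_sat (f g : ℕ →. ℕ) (hnle : ¬ SubTuringLE f g) (e : ℕ) :
    ∃ (N' : Finset ℕ) (n m : ℕ), m ∈ f n ∧ genA f g ⊆ ((↑N' : Set ℕ))ᶜ ∧
      ¬ HaltsTo (ΦE e) (oracS f g (↑N' : Set ℕ)ᶜ) n m := by
  by_cases H : ∃ N' : Finset ℕ, (stages f g (Nat.pair e 1)).2 ⊆ N' ∧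
      Disjoint N' (stages f g (Nat.pair e 1)).1 ∧ ∃ n m, m ∈ f n ∧
      ¬ HaltsTo (ΦE e) (oracS f g (↑N' : Set ℕ)ᶜ) n m
  · obtain ⟨hsub, hdisj, n, m, hmf, hnh⟩ := H.choose_spec
    refine ⟨H.choose, n, m, hmf, ?_, hnh⟩
    have hN : H.choose = (stages f g (Nat.pair e 1 + 1)).2 := by
      rw [stages_pair_succ, stepSel_def1, dif_pos H]
    rw [hN]
    exact genA_sub_compl f g _
  · push_neg at H
    exact absurd (subTuring_of_R2fail (partrec_ΦE e) (stages f g (Nat.pair e 1)).1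
      (stages f g (Nat.pair e 1)).2 (stages_disj f g _)
      (fun N' h1 h2 n m hm => H N' h1 h2 n m hm)) hnle

theorem R3_sat (f g : ℕ →. ℕ) (e : ℕ) (t : ℕ → ℕ)
    (ht : ∀ n, HaltsTo (ΦE e) (oracS f g (genA f g)) n (t n)) :
    SubTuringLE (t : ℕ →. ℕ) g := by
  by_cases H : ∃ N' : Finset ℕ, (stages f g (Nat.pair e 2)).2 ⊆ N' ∧
      Disjoint N' (stages f g (Nat.pair e 2)).1 ∧ ∃ n, ∀ m,
      ¬ HaltsTo (ΦE e) (oracS f g (↑N' : Set ℕ)ᶜ) n m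
  · exfalso
    obtain ⟨hsub, hdisj, n, hnh⟩ := H.choose_spec
    apply hnh (t n)
    have hN : H.choose = (stages f g (Nat.pair e 2 + 1)).2 := by
      rw [stages_pair_succ, stepSel_def2, dif_pos H]
    apply haltsTo_mono (oracS_mono (f := f) (g := g) ?_) (ht n)
    rw [hN]
    exact genA_sub_compl f g _
  · push_neg at H
    apply subTuring_total_of_R3fail (partrec_ΦE e) (stages f g (Nat.pair e 2)).1
      (stages f g (Nat.pair e 2)).2 (stages_disj f g _)
      (fun N' h1 h2 n => H N' h1 h2 n) t
    intro n
    exact haltsTo_mono (oracS_mono (genA_sub_compl f g _)) (ht n)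

end STAux

theorem subTuring_dense (f g : ℕ →. ℕ)
    (hle : SubTuringLE g f) (hnle : ¬ SubTuringLE f g) :
    ∃ A : Set ℕ,
      (SubTuringLE g (PJoin (restrictTo f A) g) ∧
        ¬ SubTuringLE (PJoin (restrictTo f A) g) g) ∧
      (SubTuringLE (PJoin (restrictTo f A) g) f ∧
        ¬ SubTuringLE f (PJoin (restrictTo f A) g)) ∧
      ∀ t : ℕ → ℕ, SubTuringLE (t : ℕ →. ℕ) (PJoin (restrictTo f A) g) →
        SubTuringLE (t : ℕ →. ℕ) g := by
  obtain ⟨Φg, hΦg, hgred⟩ := hle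
  refine ⟨STAux.genA f g, ⟨?_, ?_⟩, ⟨?_, ?_⟩, ?_⟩
  · -- g ≤ (f↾A) ⊕ g
    exact ⟨STAux.joinRight, STAux.partrec_joinRight, fun n m hm => STAux.joinRight_halts hm⟩
  · -- ¬ (f↾A) ⊕ g ≤ g
    rintro ⟨Φ, hΦ, hred⟩
    obtain ⟨e, he⟩ := STAux.ΦE_encode hΦ
    obtain ⟨n, m, hnA, hmf, hnh⟩ := STAux.R1_sat f g hnle e
    apply hnh
    apply STAux.haltsTo_congr (fun l => (he l).symm)
    apply hred
    have h2 : (2*n) % 2 = 0 := by omega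
    have hdiv : (2*n) / 2 = n := by omega
    show m ∈ STAux.oracS f g (STAux.genA f g) (2*n)
    rw [STAux.oracS_even h2, hdiv]
    exact STAux.mem_restrictTo.2 ⟨hnA, hmf⟩
  · -- (f↾A) ⊕ g ≤ f
    refine ⟨STAux.evenOdd Φg, STAux.partrec_evenOdd hΦg, ?_⟩
    intro k m hm
    by_cases hk : k % 2 = 0
    · apply STAux.evenOdd_halts_even hk
      have hm' : m ∈ restrictTo f (STAux.genA f g) (k / 2) := by
        rw [← STAux.oracS_even hk]
        exact hm
      exact (STAux.mem_restrictTo.1 hm').2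
    · have hk1 : k % 2 = 1 := by omega
      apply STAux.evenOdd_halts_odd hk1
      apply hgred
      have hm' : m ∈ STAux.oracS f g (STAux.genA f g) k := hm
      rwa [STAux.oracS_odd hk] at hm'
  · -- ¬ f ≤ (f↾A) ⊕ g
    rintro ⟨Φ, hΦ, hred⟩
    obtain ⟨e, he⟩ := STAux.ΦE_encode hΦ
    obtain ⟨N', n, m, hmf, hsub, hnh⟩ := STAux.R2_sat f g hnle e
    apply hnh
    apply STAux.haltsTo_mono (STAux.oracS_mono (f := f) (g := g) hsub)
    exact STAux.haltsTo_congr (fun l => (he l).symm) (hred n m hmf)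
  · -- strong quasiminimality
    rintro t ⟨Φ, hΦ, hred⟩
    obtain ⟨e, he⟩ := STAux.ΦE_encode hΦ
    apply STAux.R3_sat f g e t
    intro n
    apply STAux.haltsTo_congr (fun l => (he l).symm)
    exact hred n (t n) (by simp)
end
end
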